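/- arXiv:2509.15013 — 4 statements merged into one kernel-verified Lean document; each statement's English description precedes it below -/
import Mathlib

section
/- Let m ≥ 2, n ≥ 2, h ≥ 1 and let q = p^d with p prime and d ≥ h. If some Gabidulin construction H is an MR (m, n, a=1, b=1, h) grid code over F_q, then q ≥ binom(n, ⌈h/2⌉). -/
open Finset

/-- A subset of `[m] × [n]`, viewed as the edge set of a bipartite graph with left
vertex set `Fin m` and right vertex set `Fin n`, is a *simple cycle* (of length `2k`,
`k ≥ 2`) if it has the form
`{(i₁,j₁),(i₂,j₁),(i₂,j₂),(i₃,j₂),…,(i_k,j_k),(i₁,j_k)}`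
for pairwise distinct `i₁,…,i_k` and pairwise distinct `j₁,…,j_k`. -/
def IsSimpleCycle {m n : ℕ} (C : Finset (Fin m × Fin n)) : Prop :=
  ∃ k : ℕ, 2 ≤ k ∧ ∃ (I : ℕ → Fin m) (J : ℕ → Fin n),
    Set.InjOn I (Set.Iio k) ∧ Set.InjOn J (Set.Iio k) ∧
    C = ((Finset.range k).image fun ℓ => (I ℓ, J ℓ)) ∪
        ((Finset.range k).image fun ℓ => (I ((ℓ + 1) % k), J ℓ))

/-- An edge set is *acyclic* if it contains no simple cycle. -/
def IsAcyclicEdges {m n : ℕ} (E : Finset (Fin m × Fin n)) : Prop :=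
  ∀ C ⊆ E, ¬ IsSimpleCycle C

/-- The parity-check matrix of an `(m, n, a = 1, b = 1, h)` grid code over `F` with
global parity-check vectors `c`.  Rows are indexed by `Fin m ⊕ (Fin (n-1) ⊕ Fin h)`
(the `m` row checks, the first `n - 1` column checks, and the `h` global checks) and
columns by `Fin m × Fin n`. -/
def gridH (F : Type*) [Field F] (m n h : ℕ) (c : Fin m × Fin n → Fin h → F) :
    Matrix (Fin m ⊕ (Fin (n - 1) ⊕ Fin h)) (Fin m × Fin n) F :=
  Matrix.of fun r ij =>
    Sum.elim (fun i => if ij.1 = i then (1 : F) else 0)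
      (Sum.elim (fun j : Fin (n - 1) => if (ij.2 : ℕ) = (j : ℕ) then (1 : F) else 0)
        (fun k => c ij k)) r

/-- The grid code with global parity checks `c` is *maximally recoverable* (MR) if the
columns of its parity-check matrix indexed by `E` are linearly independent for every
pattern `E` which is the union of an acyclic edge set and at most `h` further edges. -/
def IsMR (F : Type*) [Field F] (m n h : ℕ) (c : Fin m × Fin n → Fin h → F) : Prop :=
  ∀ E : Finset (Fin m × Fin n),
    (∃ E' F' : Finset (Fin m × Fin n),
        IsAcyclicEdges E' ∧ F'.card ≤ h ∧ E = E' ∪ F') →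
    ((gridH F m n h c).submatrix id (fun e : E => (e : Fin m × Fin n))).rank = E.card

/-- A *spanning tree* of the complete bipartite graph on `[m] ⊔ [n]`: an acyclic edge
set with `m + n - 1` edges. -/
def IsSpanningTree {m n : ℕ} (T : Finset (Fin m × Fin n)) : Prop :=
  IsAcyclicEdges T ∧ T.card = m + n - 1

/-- `IsCycleSumOf c C s` says `C` is a simple cycle
`{(i₁,j₁),(i₂,j₁),…,(i_k,j_k),(i₁,j_k)}` and
`s = Σ_{ℓ=1}^{k} (c^{i_ℓ,j_ℓ} − c^{i_{ℓ+1},j_ℓ})` (with `i_{k+1} := i₁`) is the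
corresponding cycle sum `Σ_H(C) ∈ F^h`. -/
def IsCycleSumOf {F : Type*} [Field F] {m n h : ℕ} (c : Fin m × Fin n → Fin h → F)
    (C : Finset (Fin m × Fin n)) (s : Fin h → F) : Prop :=
  ∃ k : ℕ, 2 ≤ k ∧ ∃ (I : ℕ → Fin m) (J : ℕ → Fin n),
    Set.InjOn I (Set.Iio k) ∧ Set.InjOn J (Set.Iio k) ∧
    C = ((Finset.range k).image fun ℓ => (I ℓ, J ℓ)) ∪
        ((Finset.range k).image fun ℓ => (I ((ℓ + 1) % k), J ℓ)) ∧
    s = ∑ ℓ ∈ Finset.range k, (c (I ℓ, J ℓ) - c (I ((ℓ + 1) % k), J ℓ))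

/-- `IsGammaCycleSumOf γ C g` says `C` is a simple cycle and
`g = γ(C) = Σ_{ℓ=1}^{k} (γ(i_ℓ,j_ℓ) − γ(i_{ℓ+1},j_ℓ))`. -/
def IsGammaCycleSumOf {F : Type*} [Field F] {m n : ℕ} (γ : Fin m × Fin n → F)
    (C : Finset (Fin m × Fin n)) (g : F) : Prop :=
  ∃ k : ℕ, 2 ≤ k ∧ ∃ (I : ℕ → Fin m) (J : ℕ → Fin n),
    Set.InjOn I (Set.Iio k) ∧ Set.InjOn J (Set.Iio k) ∧
    C = ((Finset.range k).image fun ℓ => (I ℓ, J ℓ)) ∪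
        ((Finset.range k).image fun ℓ => (I ((ℓ + 1) % k), J ℓ)) ∧
    g = ∑ ℓ ∈ Finset.range k, (γ (I ℓ, J ℓ) - γ (I ((ℓ + 1) % k), J ℓ))


private lemma acyclic_pointed_aux {m n : ℕ} (i0 : Fin m) (j0 : Fin n)
    (E' : Finset (Fin m × Fin n)) (hE : ∀ e ∈ E', e.1 = i0 ∨ e.2 = j0) :
    IsAcyclicEdges E' := by
  rintro C hC ⟨k, hk, I, J, hI, hJ, rfl⟩
  have hmem : ∀ ℓ < k, (I ℓ, J ℓ) ∈ E' ∧ (I ((ℓ + 1) % k), J ℓ) ∈ E' :=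
    fun ℓ hℓ => ⟨hC (Finset.mem_union_left _ (Finset.mem_image_of_mem _ (Finset.mem_range.2 hℓ))),
      hC (Finset.mem_union_right _ (Finset.mem_image_of_mem _ (Finset.mem_range.2 hℓ)))⟩
  have hne : ∀ ℓ < k, I ℓ ≠ I ((ℓ + 1) % k) := by
    intro ℓ hℓ hIeq
    have h1 : (ℓ + 1) % k < k := Nat.mod_lt _ (by omega)
    have heq := hI (Set.mem_Iio.2 hℓ) (Set.mem_Iio.2 h1) hIeq
    rcases Nat.lt_or_ge (ℓ + 1) k with h | h
    · rw [Nat.mod_eq_of_lt h] at heq; omega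
    · have hk1 : ℓ + 1 = k := by omega
      rw [hk1, Nat.mod_self] at heq; omega
  have hJj0 : ∀ ℓ < k, J ℓ = j0 := by
    intro ℓ hℓ
    obtain ⟨h1, h2⟩ := hmem ℓ hℓ
    rcases hE _ h1 with h | h
    · rcases hE _ h2 with h' | h'
      · exact absurd (h.trans h'.symm) (hne ℓ hℓ)
      · exact h'
    · exact h
  have h0 := hJj0 0 (by omega)
  have h1 := hJj0 1 (by omega)
  have := hJ (Set.mem_Iio.2 (by omega : (0:ℕ) < k)) (Set.mem_Iio.2 (by omega : (1:ℕ) < k))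
    (h0.trans h1.symm)
  omega

private lemma rank_lt_of_kernel_aux {R : Type*} [Field R] {α β : Type*} [Fintype α] [Fintype β]
    (M : Matrix α β R) (y : β → R) (hy : y ≠ 0) (h0 : M.mulVec y = 0) :
    M.rank < Fintype.card β := by
  classical
  have hker : y ∈ LinearMap.ker M.mulVecLin := by
    rw [LinearMap.mem_ker, Matrix.mulVecLin_apply, h0]
  have hpos : 0 < Module.finrank R (LinearMap.ker M.mulVecLin) := by
    rw [Module.finrank_pos_iff]
    exact nontrivial_of_ne ⟨y, hker⟩ 0 (fun h => hy (by simpa using congrArg Subtype.val h))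
  have hrn := LinearMap.finrank_range_add_finrank_ker M.mulVecLin
  rw [Module.finrank_pi] at hrn
  rw [Matrix.rank]
  omega

/-- Theorem 4.1.  Let `q = p ^ d` with `p` prime and `d ≥ h`.  If some
Gabidulin construction (with evaluation points `γ`) is an MR `(m, n, a=1, b=1, h)` grid
code over `F_q`, then `q ≥ binom(n, ⌈h/2⌉)`.  (Here `⌈h/2⌉ = (h + 1) / 2` in `ℕ`.) -/
theorem statement9 (p d m n h : ℕ) (hp : p.Prime) (hd : h ≤ d) (hh : 1 ≤ h)
    (hm : 2 ≤ m) (hn : 2 ≤ n)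
    (F : Type*) [Field F] [Fintype F] (hcard : Fintype.card F = p ^ d)
    (γ : Fin m × Fin n → F)
    (hMR : IsMR F m n h (fun ij l => γ ij ^ p ^ (l : ℕ))) :
    n.choose ((h + 1) / 2) ≤ Fintype.card F := by
    classical
  haveI : Fact p.Prime := ⟨hp⟩
  haveI hcharP : CharP F p := by
    obtain ⟨k, hrp, hc2⟩ := FiniteField.card F (ringChar F)
    have hpq : p ^ d = ringChar F ^ (k : ℕ) := hcard.symm.trans hc2
    have hdvd : p ∣ ringChar F ^ (k : ℕ) := hpq ▸ dvd_pow_self p (by omega : d ≠ 0)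
    exact ringChar.of_eq ((Nat.prime_dvd_prime_iff_eq hp hrp).1 (hp.dvd_of_dvd_pow hdvd)).symm
  set t := (h + 1) / 2 with htdef
  set i0 : Fin m := ⟨0, by omega⟩ with hi0def
  set i1 : Fin m := ⟨1, by omega⟩ with hi1def
  have hi01 : i0 ≠ i1 := by simp [hi0def, hi1def, Fin.ext_iff]
  set δ : Fin n → F := fun j => γ (i0, j) - γ (i1, j) with hδdef
  have key : ∀ S S' : Finset (Fin n), S.card = t → S'.card = t →
      (∑ j ∈ S, δ j) = (∑ j ∈ S', δ j) → S = S' := by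
    intro S S' hScard hS'card hgs
    by_contra hnoteq
    set A := S \ S' with hAdef
    set B := S' \ S with hBdef
    have hAB : Disjoint A B := disjoint_sdiff_sdiff
    have hcardAB : A.card = B.card := by
      have h1 : (S ∩ S').card + A.card = S.card := Finset.card_inter_add_card_sdiff S S'
      have h2 : (S ∩ S').card + B.card = S'.card := by
        rw [Finset.inter_comm]; exact Finset.card_inter_add_card_sdiff S' S
      omega
    have hAne : A.Nonempty := by
      rw [Finset.nonempty_iff_ne_empty]
      intro hA0
      have hsub : S ⊆ S' := by rwa [← Finset.sdiff_eq_empty_iff_subset]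
      exact hnoteq (Finset.eq_of_subset_of_card_le hsub (by omega))
    have hsum0 : (∑ j ∈ A, δ j) - ∑ j ∈ B, δ j = 0 := by
      have h1 : (∑ j ∈ A, δ j) + ∑ j ∈ S ∩ S', δ j = ∑ j ∈ S, δ j := by
        rw [hAdef, ← Finset.sdiff_inter_self_left S S']
        exact Finset.sum_sdiff Finset.inter_subset_left
      have h2 : (∑ j ∈ B, δ j) + ∑ j ∈ S ∩ S', δ j = ∑ j ∈ S', δ j := by
        rw [hBdef, ← Finset.sdiff_inter_self_left S' S, Finset.inter_comm S S']
        exact Finset.sum_sdiff Finset.inter_subset_left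
      linear_combination h1 - h2 + hgs
    have hAcard : A.card ≤ t := hScard ▸ Finset.card_le_card Finset.sdiff_subset
    set D := A ∪ B with hDdef
    have hDcard : D.card = A.card + B.card := Finset.card_union_of_disjoint hAB
    obtain ⟨j0, hj0A⟩ := hAne
    have hj0D : j0 ∈ D := Finset.mem_union_left _ hj0A
    set E : Finset (Fin m × Fin n) := ({i0, i1} : Finset (Fin m)) ×ˢ D with hEdef
    set E' : Finset (Fin m × Fin n) := (({i0} : Finset (Fin m)) ×ˢ D) ∪ {(i1, j0)} with hE'def
    set F' : Finset (Fin m × Fin n) := ({i1} : Finset (Fin m)) ×ˢ (D.erase j0) with hF'def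
    have hE'acyc : IsAcyclicEdges E' := acyclic_pointed_aux i0 j0 E' (by
      intro e he
      rw [hE'def, Finset.mem_union, Finset.mem_product, Finset.mem_singleton,
        Finset.mem_singleton] at he
      rcases he with ⟨h1, _⟩ | h1
      · exact Or.inl h1
      · exact Or.inr (by rw [h1]))
    have hF'card : F'.card ≤ h := by
      rw [hF'def, Finset.card_product, Finset.card_singleton, one_mul,
        Finset.card_erase_of_mem hj0D]
      omega
    have hEdecomp : E = E' ∪ F' := by
      ext ⟨i, j⟩
      simp only [hEdef, hE'def, hF'def, Finset.mem_union, Finset.mem_product,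
        Finset.mem_insert, Finset.mem_singleton, Finset.mem_erase, Prod.mk.injEq]
      rcases eq_or_ne j j0 with rfl | hj
      · have hd0 := hj0D
        tauto
      · tauto
    have hrank := hMR E ⟨E', F', hE'acyc, hF'card, hEdecomp⟩
    set χ : Fin n → F := fun j => if j ∈ A then 1 else if j ∈ B then -1 else 0 with hχdef
    set x : Fin m × Fin n → F :=
      fun e => if e.1 = i0 then χ e.2 else if e.1 = i1 then -χ e.2 else 0 with hxdef
    have hχA : ∀ j ∈ A, χ j = 1 := fun j hj => if_pos hj
    have hχB : ∀ j ∈ B, χ j = -1 := by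
      intro j hj
      have hjA : j ∉ A := Finset.disjoint_right.1 hAB hj
      rw [hχdef]; simp only [if_neg hjA, if_pos hj]
    have hx0 : ∀ j, x (i0, j) = χ j := fun j => if_pos rfl
    have hx1 : ∀ j, x (i1, j) = -χ j := by
      intro j
      have h10 : i1 ≠ i0 := hi01.symm
      simp [hxdef, h10]
    have hχ0 : ∑ j ∈ D, χ j = 0 := by
      rw [hDdef, Finset.sum_union hAB, Finset.sum_congr rfl hχA, Finset.sum_congr rfl hχB]
      simp [hcardAB]
    have hχδ0 : ∑ j ∈ D, χ j * δ j = 0 := by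
      have hA' : ∑ j ∈ A, χ j * δ j = ∑ j ∈ A, δ j :=
        Finset.sum_congr rfl (fun j hj => by rw [hχA j hj, one_mul])
      have hB' : ∑ j ∈ B, χ j * δ j = ∑ j ∈ B, -δ j :=
        Finset.sum_congr rfl (fun j hj => by rw [hχB j hj, neg_one_mul])
      rw [hDdef, Finset.sum_union hAB, hA', hB', Finset.sum_neg_distrib]
      linear_combination hsum0
    set M := ((gridH F m n h (fun ij l => γ ij ^ p ^ (l : ℕ))).submatrix id
      (fun e : E => (e : Fin m × Fin n))) with hMdef
    have hkernel : M.mulVec (fun e : E => x ↑e) = 0 := by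
      funext r
      rw [Matrix.mulVec, dotProduct]
      simp only [hMdef, Matrix.submatrix_apply, id_eq, Pi.zero_apply]
      rw [Finset.sum_coe_sort E
        (fun e => gridH F m n h (fun ij l => γ ij ^ p ^ (l : ℕ)) r e * x e)]
      rw [hEdef, Finset.sum_product,
        Finset.sum_insert (by simp [hi01] : i0 ∉ ({i1} : Finset (Fin m))),
        Finset.sum_singleton, ← Finset.sum_add_distrib]
      cases r with
      | inl i =>
        simp only [gridH, Matrix.of_apply, Sum.elim_inl]
        by_cases h0 : (i0 : Fin m) = i
        · have h1 : ¬ (i1 : Fin m) = i := fun hcon => hi01 (h0.trans hcon.symm)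
          simp only [if_pos h0, if_neg h1, one_mul, zero_mul, add_zero]
          rw [Finset.sum_congr rfl (fun j _ => hx0 j)]
          exact hχ0
        · by_cases h1 : (i1 : Fin m) = i
          · simp only [if_neg h0, if_pos h1, one_mul, zero_mul, zero_add]
            rw [Finset.sum_congr rfl (fun j _ => hx1 j), Finset.sum_neg_distrib, hχ0, neg_zero]
          · simp [if_neg h0, if_neg h1]
      | inr r' =>
        cases r' with
        | inl j' =>
          simp only [gridH, Matrix.of_apply, Sum.elim_inr, Sum.elim_inl]
          apply Finset.sum_eq_zero
          intro j _
          rw [hx0, hx1]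
          ring
        | inr l =>
          simp only [gridH, Matrix.of_apply, Sum.elim_inr]
          have hterm : ∀ j ∈ D,
              γ (i0, j) ^ p ^ (l : ℕ) * x (i0, j) + γ (i1, j) ^ p ^ (l : ℕ) * x (i1, j)
                = (χ j * δ j) ^ p ^ (l : ℕ) := by
            intro j hj
            have hχpow : (χ j) ^ p ^ (l : ℕ) = χ j := by
              rcases Finset.mem_union.1 hj with hj' | hj'
              · rw [hχA j hj', one_pow]
              · rw [hχB j hj']
                exact neg_one_pow_char_pow F p (l : ℕ)
            rw [hx0, hx1, mul_pow, hχpow, hδdef]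
            rw [sub_pow_char_pow]
            ring
          rw [Finset.sum_congr rfl hterm, ← sum_pow_char_pow, hχδ0]
          exact zero_pow (pow_ne_zero _ hp.pos.ne')
    have hynz : (fun e : E => x ↑e) ≠ 0 := by
      intro hcon
      have hmem0 : ((i0, j0) : Fin m × Fin n) ∈ E :=
        Finset.mem_product.2 ⟨Finset.mem_insert_self _ _, hj0D⟩
      have := congrFun hcon ⟨(i0, j0), hmem0⟩
      rw [Pi.zero_apply, hx0, hχA j0 hj0A] at this
      exact one_ne_zero this
    have hlt := rank_lt_of_kernel_aux M _ hynz hkernel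
    rw [Fintype.card_coe] at hlt
    omega
  have hle : (Finset.powersetCard t (univ : Finset (Fin n))).card ≤ (univ : Finset F).card :=
    Finset.card_le_card_of_injOn (fun S => ∑ j ∈ S, δ j) (fun _ _ => Finset.mem_univ _)
      (fun S hS S' hS' hg => key S S'
        (Finset.mem_powersetCard_univ.1 (Finset.mem_coe.1 hS))
        (Finset.mem_powersetCard_univ.1 (Finset.mem_coe.1 hS')) hg)
  rwa [Finset.card_powersetCard, Finset.card_univ, Fintype.card_fin, Finset.card_univ] at hle
end

section
/- Let m ≥ 2 and n ≥ 2. If there exists an MR (m, n, a=1, b=1, h=1) grid code over a finite field F_q, then q ≥ n. -/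
open Finset

lemma four_le_card_of_isSimpleCycle {m n : ℕ} {C : Finset (Fin m × Fin n)}
    (h : IsSimpleCycle C) : 4 ≤ C.card := by
  obtain ⟨k, hk, I, J, hI, hJ, hC⟩ := h
  have hmem : ∀ ℓ ∈ Finset.range k, (ℓ : ℕ) ∈ Set.Iio k := by
    intro ℓ hℓ; simpa using Finset.mem_range.mp hℓ
  have hA : ((Finset.range k).image fun ℓ => (I ℓ, J ℓ)).card = k := by
    rw [Finset.card_image_of_injOn, Finset.card_range]
    intro a ha b hb hab
    exact hJ (hmem a ha) (hmem b hb) (congrArg Prod.snd hab)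
  have hB : ((Finset.range k).image fun ℓ => (I ((ℓ + 1) % k), J ℓ)).card = k := by
    rw [Finset.card_image_of_injOn, Finset.card_range]
    intro a ha b hb hab
    exact hJ (hmem a ha) (hmem b hb) (congrArg Prod.snd hab)
  have hdisj : Disjoint ((Finset.range k).image fun ℓ => (I ℓ, J ℓ))
      ((Finset.range k).image fun ℓ => (I ((ℓ + 1) % k), J ℓ)) := by
    rw [Finset.disjoint_left]
    rintro p hp hq
    obtain ⟨a, ha, rfl⟩ := Finset.mem_image.mp hp
    obtain ⟨b, hb, hab⟩ := Finset.mem_image.mp hq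
    have hba : b = a := hJ (hmem b hb) (hmem a ha) (congrArg Prod.snd hab)
    subst hba
    have h1 : I ((b + 1) % k) = I b := congrArg Prod.fst hab
    have hb' : b < k := Finset.mem_range.mp hb
    have h2 : (b + 1) % k = b :=
      hI (Set.mem_Iio.mpr (Nat.mod_lt _ (by omega))) (Set.mem_Iio.mpr hb') h1
    rcases Nat.lt_or_ge (b + 1) k with h' | h'
    · rw [Nat.mod_eq_of_lt h'] at h2; omega
    · have hbk : b + 1 = k := by omega
      rw [hbk, Nat.mod_self] at h2; omega
  rw [hC, Finset.card_union_of_disjoint hdisj, hA, hB]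
  omega

/-- Corollary 4.2.  If `m ≥ 2`, `n ≥ 2` and an MR
`(m, n, a=1, b=1, h=1)` grid code exists over a finite field `F_q`, then `q ≥ n`. -/
theorem statement10 (m n : ℕ) (hm : 2 ≤ m) (hn : 2 ≤ n)
    (F : Type*) [Field F] [Fintype F]
    (hex : ∃ c : Fin m × Fin n → Fin 1 → F, IsMR F m n 1 c) :
    n ≤ Fintype.card F := by
  obtain ⟨c, hMR⟩ := hex
  set i0 : Fin m := ⟨0, by omega⟩ with hi0
  set i1 : Fin m := ⟨1, by omega⟩ with hi1
  have hi01 : i0 ≠ i1 := by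
    intro h; have := congrArg Fin.val h; simp [hi0, hi1] at this
  have hinj : Function.Injective (fun j : Fin n => c (i0, j) 0 - c (i1, j) 0) := by
    intro j j' hγ
    by_contra hjj'
    -- the 4-cycle
    set E : Finset (Fin m × Fin n) :=
      insert (i0, j) (insert (i1, j) (insert (i0, j') {(i1, j')})) with hE
    have hn1 : (i0, j) ∉ insert (i1, j) (insert (i0, j') ({(i1, j')} : Finset _)) := by
      simp [Prod.ext_iff, hi01, hjj']
    have hn2 : (i1, j) ∉ insert (i0, j') ({(i1, j')} : Finset (Fin m × Fin n)) := by
      simp [Prod.ext_iff, hi01, hjj']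
    have hn3 : (i0, j') ∉ ({(i1, j')} : Finset (Fin m × Fin n)) := by
      simp [Prod.ext_iff, hi01]
    have hcard : E.card = 4 := by
      rw [hE, Finset.card_insert_of_notMem hn1, Finset.card_insert_of_notMem hn2,
        Finset.card_insert_of_notMem hn3, Finset.card_singleton]
    -- decomposition
    have hdec : ∃ E' F' : Finset (Fin m × Fin n),
        IsAcyclicEdges E' ∧ F'.card ≤ 1 ∧ E = E' ∪ F' := by
      refine ⟨insert (i0, j) (insert (i1, j) {(i0, j')}), {(i1, j')}, ?_, by simp, ?_⟩
      · intro C hC hcyc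
        have h4 := four_le_card_of_isSimpleCycle hcyc
        have hle := Finset.card_le_card hC
        have h3 : (insert (i0, j) (insert (i1, j) ({(i0, j')} : Finset (Fin m × Fin n)))).card ≤ 3 := by
          refine le_trans (Finset.card_insert_le _ _) (Nat.succ_le_succ ?_)
          refine le_trans (Finset.card_insert_le _ _) (Nat.succ_le_succ ?_)
          simp
        omega
      · ext p; simp [hE]
    have hrank := hMR E hdec
    rw [hcard] at hrank
    set M := (gridH F m n 1 c).submatrix id (fun e : E => (e : Fin m × Fin n)) with hM
    -- kernel vector
    set w : Fin m × Fin n → F := fun p =>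
      if p = (i0, j) then 1 else if p = (i1, j) then -1 else
        if p = (i0, j') then -1 else 1 with hw
    set v : E → F := fun e => w e with hv
    have hker : M.mulVec v = 0 := by
      funext r
      have : M.mulVec v r = ∑ p ∈ E, gridH F m n 1 c r p * w p := by
        rw [Matrix.mulVec, dotProduct]
        rw [← Finset.sum_coe_sort E (fun p => gridH F m n 1 c r p * w p)]
        rfl
      rw [this, hE, Finset.sum_insert hn1, Finset.sum_insert hn2, Finset.sum_insert hn3,
        Finset.sum_singleton]
      have hw1 : w (i0, j) = 1 := by simp [hw]
      have hw2 : w (i1, j) = -1 := by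
        simp only [hw]
        rw [if_neg (fun h => hi01 (congrArg Prod.fst h).symm)]; simp
      have hw3 : w (i0, j') = -1 := by
        simp only [hw]
        rw [if_neg (fun h => hjj' (congrArg Prod.snd h).symm),
          if_neg (fun h => hi01 (congrArg Prod.fst h))]; simp
      have hw4 : w (i1, j') = 1 := by
        simp only [hw]
        rw [if_neg (fun h => hi01 (congrArg Prod.fst h).symm),
          if_neg (fun h => hjj' (congrArg Prod.snd h).symm),
          if_neg (fun h => hi01 (congrArg Prod.fst h).symm)]
      rw [hw1, hw2, hw3, hw4]
      rcases r with i | jr | k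
      · simp only [gridH, Matrix.of_apply, Sum.elim_inl]
        clear this hv hM hw hE hi0 hi1
        split_ifs <;> simp_all <;> ring
      · simp only [gridH, Matrix.of_apply, Sum.elim_inr, Sum.elim_inl]
        clear this hv hM hw hE hi0 hi1
        split_ifs <;> simp_all <;> ring
      · simp only [gridH, Matrix.of_apply, Sum.elim_inr]
        have hk : k = 0 := Subsingleton.elim _ _
        subst hk
        simp only [Pi.zero_apply]
        linear_combination hγ
    have hvne : v ≠ 0 := by
      intro h0
      have hmem : (i0, j) ∈ E := by simp [hE]
      have := congrFun h0 ⟨(i0, j), hmem⟩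
      simp [hv, hw] at this
    have hkerne : (⟨v, by rwa [LinearMap.mem_ker, Matrix.mulVecLin_apply]⟩ :
        LinearMap.ker M.mulVecLin) ≠ 0 := by
      intro h0
      exact hvne (congrArg Subtype.val h0)
    have hnt : Nontrivial (LinearMap.ker M.mulVecLin) := ⟨_, 0, hkerne⟩
    have hpos : 0 < Module.finrank F (LinearMap.ker M.mulVecLin) :=
      Module.finrank_pos_iff.mpr hnt
    have hrn := LinearMap.finrank_range_add_finrank_ker M.mulVecLin
    have hdom : Module.finrank F (E → F) = 4 := by
      rw [Module.finrank_fintype_fun_eq_card]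
      simp [hcard]
    have hMr : M.rank = Module.finrank F (LinearMap.range M.mulVecLin) := rfl
    rw [hMr] at hrank
    omega
  calc n = Fintype.card (Fin n) := (Fintype.card_fin n).symm
    _ ≤ Fintype.card F := Fintype.card_le_of_injective _ hinj
end

section
/- Let h ≥ h' ≥ 1, m ≥ 4, and n ≥ h − h' + 3. If there exists an MR (m, n, a=1, b=1, h) grid code over a finite field F_q, then there also exists an MR (m−2, n−(h−h'+1), a=1, b=1, h') grid code over the same field F_q. In particular, q(m, n, 1, 1, h) ≥ q(m−2, n−h+h'−1, 1, 1, h'), where q(·) denotes the minimum field size over which an MR grid code with those parameters exists. -/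
open Finset

-- ===== L1 =====
lemma rank_eq_card_iff_indep {R C K : Type*} [Fintype R] [Fintype C] [DecidableEq C]
    [Field K] (A : Matrix R C K) (E : Finset C) :
    ((A.submatrix id (fun e : E => (e : C))).rank = E.card) ↔
      ∀ x : C → K, (∀ e, e ∉ E → x e = 0) →
        (∀ r, ∑ e, x e * A r e = 0) → x = 0 := by
  classical
  set M : Matrix R E K := A.submatrix id (fun e : E => (e : C)) with hM
  have hdom : Module.finrank K (E → K) = E.card := by
    rw [Module.finrank_fintype_fun_eq_card, Fintype.card_coe]
  have hrn := LinearMap.finrank_range_add_finrank_ker M.mulVecLin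
  have hker : M.rank = E.card ↔ LinearMap.ker M.mulVecLin = ⊥ := by
    rw [Matrix.rank]
    constructor
    · intro h
      have : Module.finrank K (LinearMap.ker M.mulVecLin) = 0 := by omega
      exact Submodule.finrank_eq_zero.mp this
    · intro h
      rw [h] at hrn
      simpa [hdom] using hrn
  rw [hker, LinearMap.ker_eq_bot']
  have key : ∀ (x : C → K) (r : R), (∀ e, e ∉ E → x e = 0) →
      ∑ e : E, A r e * x e = ∑ e : C, x e * A r e := by
    intro x r hsupp
    rw [Finset.sum_coe_sort E (fun e => A r e * x e)]
    rw [Finset.sum_congr rfl (fun e _ => mul_comm (A r e) (x e))]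
    exact Finset.sum_subset (Finset.subset_univ E)
      (fun e _ he => by rw [hsupp e he, zero_mul])
  constructor
  · intro h x hsupp hchk
    have hv : (fun e : E => x e) = 0 := by
      apply h
      ext r
      simp only [Matrix.mulVecLin_apply, Matrix.mulVec, dotProduct, hM,
        Matrix.submatrix_apply, id_eq, Pi.zero_apply]
      rw [key x r hsupp]
      exact hchk r
    funext e
    by_cases he : e ∈ E
    · exact congrFun hv ⟨e, he⟩
    · exact hsupp e he
  · intro h v hv
    set x : C → K := fun e => if he : e ∈ E then v ⟨e, he⟩ else 0 with hxdef
    have hsupp : ∀ e, e ∉ E → x e = 0 := fun e he => by simp [hxdef, he]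
    have hx : x = 0 := by
      apply h x hsupp
      intro r
      rw [← key x r hsupp]
      have := congrFun hv r
      simp only [Matrix.mulVecLin_apply, Matrix.mulVec, dotProduct, hM,
        Matrix.submatrix_apply, id_eq, Pi.zero_apply] at this
      rw [← this]
      exact Finset.sum_congr rfl fun e _ => by simp [hxdef, e.2]
    funext e
    have := congrFun hx e
    simpa [hxdef, e.2] using this


section Cyc
variable {m n : ℕ} {C : Finset (Fin m × Fin n)}

lemma mem1_of_cycle {k : ℕ} {I : ℕ → Fin m} {J : ℕ → Fin n}
    (hC : C = ((Finset.range k).image fun ℓ => (I ℓ, J ℓ)) ∪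
        ((Finset.range k).image fun ℓ => (I ((ℓ + 1) % k), J ℓ)))
    {ℓ : ℕ} (hℓ : ℓ < k) : (I ℓ, J ℓ) ∈ C := by
  rw [hC]
  exact Finset.mem_union_left _ (Finset.mem_image.mpr ⟨ℓ, Finset.mem_range.mpr hℓ, rfl⟩)

lemma mem2_of_cycle {k : ℕ} {I : ℕ → Fin m} {J : ℕ → Fin n}
    (hC : C = ((Finset.range k).image fun ℓ => (I ℓ, J ℓ)) ∪
        ((Finset.range k).image fun ℓ => (I ((ℓ + 1) % k), J ℓ)))
    {ℓ : ℕ} (hℓ : ℓ < k) : (I ((ℓ + 1) % k), J ℓ) ∈ C := by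
  rw [hC]
  exact Finset.mem_union_right _ (Finset.mem_image.mpr ⟨ℓ, Finset.mem_range.mpr hℓ, rfl⟩)

/-- Any edge set whose edges only use two rows, and such that every edge in the
second row uses a single fixed column, is acyclic. -/
lemma star_acyclic {ia ib : Fin m} {j0 : Fin n} (A : Finset (Fin m × Fin n))
    (hrow : ∀ e ∈ A, e.1 = ia ∨ e.1 = ib)
    (hib : ∀ e ∈ A, e.1 = ib → e.2 = j0) : IsAcyclicEdges A := by
  rintro C hCA ⟨k, hk, I, J, hI, hJ, hC⟩
  -- some index ℓ₀ < k with I ℓ₀ = ib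
  have h01 : I 0 ≠ I 1 := fun h => by
    have := hI (show (0:ℕ) ∈ Set.Iio k by simpa using by omega)
      (show (1:ℕ) ∈ Set.Iio k by simpa using by omega) h
    omega
  obtain ⟨ℓ₀, hℓ₀k, hℓ₀⟩ : ∃ ℓ₀, ℓ₀ < k ∧ I ℓ₀ = ib := by
    rcases hrow _ (hCA (mem1_of_cycle hC (show 0 < k by omega))) with h0 | h0
    · rcases hrow _ (hCA (mem1_of_cycle hC (show 1 < k by omega))) with h1 | h1
      · exact absurd (h0.trans h1.symm) h01
      · exact ⟨1, by omega, h1⟩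
    · exact ⟨0, by omega, h0⟩
  set ℓ₁ := (ℓ₀ + (k - 1)) % k with hℓ₁def
  have hℓ₁k : ℓ₁ < k := Nat.mod_lt _ (by omega)
  have hsucc : (ℓ₁ + 1) % k = ℓ₀ := by
    rw [hℓ₁def, Nat.mod_add_mod]
    have : ℓ₀ + (k - 1) + 1 = ℓ₀ + k := by omega
    rw [this, Nat.add_mod_right, Nat.mod_eq_of_lt hℓ₀k]
  have hne : ℓ₁ ≠ ℓ₀ := by
    intro h
    rw [h] at hsucc
    rcases Nat.lt_or_ge (ℓ₀ + 1) k with hlt | hge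
    · rw [Nat.mod_eq_of_lt hlt] at hsucc; omega
    · have : ℓ₀ + 1 = k := by omega
      rw [this, Nat.mod_self] at hsucc; omega
  have e1 : (I ℓ₀, J ℓ₀) ∈ A := hCA (mem1_of_cycle hC hℓ₀k)
  have e2 : (I ℓ₀, J ℓ₁) ∈ A := by
    have := hCA (mem2_of_cycle hC hℓ₁k)
    rwa [hsucc] at this
  have hJ0 : J ℓ₀ = j0 := hib _ e1 hℓ₀
  have hJ1 : J ℓ₁ = j0 := hib _ e2 hℓ₀
  exact hne (hJ (Set.mem_Iio.mpr hℓ₁k) (Set.mem_Iio.mpr hℓ₀k) (hJ1.trans hJ0.symm))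

/-- Acyclicity pulls back along injective row/column maps. -/
lemma image_acyclic {m' n' : ℕ} [Nonempty (Fin m')] [Nonempty (Fin n')]
    {σ : Fin m' → Fin m} {τ : Fin n' → Fin n}
    (hσ : Function.Injective σ) (hτ : Function.Injective τ)
    {E : Finset (Fin m' × Fin n')} (hE : IsAcyclicEdges E) :
    IsAcyclicEdges (E.image fun p => (σ p.1, τ p.2)) := by
  rintro C hCE ⟨k, hk, I, J, hI, hJ, hC⟩
  set I' : ℕ → Fin m' := fun ℓ => Function.invFun σ (I ℓ) with hI'def
  set J' : ℕ → Fin n' := fun ℓ => Function.invFun τ (J ℓ) with hJ'def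
  have hIr : ∀ ℓ < k, σ (I' ℓ) = I ℓ := by
    intro ℓ hℓ
    obtain ⟨p, _, hp⟩ := Finset.mem_image.mp (hCE (mem1_of_cycle hC hℓ))
    have : ∃ a, σ a = I ℓ := ⟨p.1, congrArg Prod.fst hp⟩
    exact Function.invFun_eq this
  have hJr : ∀ ℓ < k, τ (J' ℓ) = J ℓ := by
    intro ℓ hℓ
    obtain ⟨p, _, hp⟩ := Finset.mem_image.mp (hCE (mem1_of_cycle hC hℓ))
    have : ∃ a, τ a = J ℓ := ⟨p.2, congrArg Prod.snd hp⟩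
    exact Function.invFun_eq this
  -- also need hIr for indices of the form (ℓ+1)%k, fine since < k
  apply hE (((Finset.range k).image fun ℓ => (I' ℓ, J' ℓ)) ∪
        ((Finset.range k).image fun ℓ => (I' ((ℓ + 1) % k), J' ℓ)))
  · intro e he
    rcases Finset.mem_union.mp he with he | he <;>
    · obtain ⟨ℓ, hℓ, rfl⟩ := Finset.mem_image.mp he
      rw [Finset.mem_range] at hℓ
      first
      | (have hmem : (I ℓ, J ℓ) ∈ C := mem1_of_cycle hC hℓ
         obtain ⟨p, hpE, hp⟩ := Finset.mem_image.mp (hCE hmem)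
         have h1 : σ p.1 = σ (I' ℓ) := by rw [hIr ℓ hℓ]; exact congrArg Prod.fst hp
         have h2 : τ p.2 = τ (J' ℓ) := by rw [hJr ℓ hℓ]; exact congrArg Prod.snd hp
         have : p = (I' ℓ, J' ℓ) := Prod.ext (hσ h1) (hτ h2)
         rwa [← this])
      | (have hℓ' : (ℓ + 1) % k < k := Nat.mod_lt _ (by omega)
         have hmem : (I ((ℓ+1)%k), J ℓ) ∈ C := mem2_of_cycle hC hℓ
         obtain ⟨p, hpE, hp⟩ := Finset.mem_image.mp (hCE hmem)
         have h1 : σ p.1 = σ (I' ((ℓ+1)%k)) := by rw [hIr _ hℓ']; exact congrArg Prod.fst hp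
         have h2 : τ p.2 = τ (J' ℓ) := by rw [hJr ℓ hℓ]; exact congrArg Prod.snd hp
         have : p = (I' ((ℓ+1)%k), J' ℓ) := Prod.ext (hσ h1) (hτ h2)
         rwa [← this])
  · refine ⟨k, hk, I', J', ?_, ?_, rfl⟩
    · intro a ha b hb hab
      apply hI ha hb
      rw [← hIr a ha, ← hIr b hb, hab]
    · intro a ha b hb hab
      apply hJ ha hb
      rw [← hJr a ha, ← hJr b hb, hab]

/-- The union of two acyclic edge sets living on disjoint row and column sets is acyclic. -/
lemma union_acyclic_of_separated (P : Fin m → Prop) (Q : Fin n → Prop)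
    {A B : Finset (Fin m × Fin n)}
    (hA : ∀ e ∈ A, P e.1 ∧ Q e.2) (hB : ∀ e ∈ B, ¬ P e.1 ∧ ¬ Q e.2)
    (hAa : IsAcyclicEdges A) (hBa : IsAcyclicEdges B) :
    IsAcyclicEdges (A ∪ B) := by
  rintro C hCAB ⟨k, hk, I, J, hI, hJ, hC⟩
  have hiff : ∀ e ∈ C, (P e.1 ↔ Q e.2) := by
    intro e he
    rcases Finset.mem_union.mp (hCAB he) with h | h
    · exact ⟨fun _ => (hA e h).2, fun _ => (hA e h).1⟩
    · exact ⟨fun hp => absurd hp (hB e h).1, fun hq => absurd hq (hB e h).2⟩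
  have step : ∀ ℓ < k, (P (I ℓ) ↔ P (I 0)) ∧ (Q (J ℓ) ↔ P (I 0)) := by
    intro ℓ hℓ
    induction ℓ with
    | zero =>
      refine ⟨Iff.rfl, ?_⟩
      exact (hiff _ (mem1_of_cycle hC hℓ)).symm
    | succ p ih =>
      have hpk : p < k := by omega
      obtain ⟨ih1, ih2⟩ := ih hpk
      have hmod : (p + 1) % k = p + 1 := Nat.mod_eq_of_lt hℓ
      have h2 : P (I ((p+1) % k)) ↔ Q (J p) := hiff _ (mem2_of_cycle hC hpk)
      rw [hmod] at h2
      have h1 : P (I (p+1)) ↔ Q (J (p+1)) := hiff _ (mem1_of_cycle hC hℓ)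
      exact ⟨h2.trans ih2, h1.symm.trans (h2.trans ih2)⟩
  have hedge : ∀ e ∈ C, (P e.1 ↔ P (I 0)) := by
    intro e he
    rw [hC] at he
    rcases Finset.mem_union.mp he with h | h <;>
      obtain ⟨ℓ, hℓ, rfl⟩ := Finset.mem_image.mp h <;> rw [Finset.mem_range] at hℓ
    · exact (step ℓ hℓ).1
    · exact (step _ (Nat.mod_lt _ (by omega))).1
  by_cases h0 : P (I 0)
  · apply hAa C ?_ ⟨k, hk, I, J, hI, hJ, hC⟩
    intro e he
    rcases Finset.mem_union.mp (hCAB he) with h | h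
    · exact h
    · exact absurd ((hedge e he).mpr h0) (hB e h).1
  · apply hBa C ?_ ⟨k, hk, I, J, hI, hJ, hC⟩
    intro e he
    rcases Finset.mem_union.mp (hCAB he) with h | h
    · exact absurd (hA e h).1 (fun hp => h0 ((hedge e he).mp hp))
    · exact h

end Cyc

-- ===== chi machinery =====
section Chi
variable {K : Type*} [Field K] {m n : ℕ}

def chi (K : Type*) [Field K] {m n : ℕ} (ia ib : Fin m) (j1 j0 : Fin n) :
    Fin m × Fin n → K := fun e =>
  (if e = (ia, j1) then (1:K) else 0) - (if e = (ib, j1) then 1 else 0)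
  + (if e = (ib, j0) then 1 else 0) - (if e = (ia, j0) then 1 else 0)

lemma sum_delta_mul {α : Type*} [Fintype α] [DecidableEq α] (p : α) (f : α → K) :
    ∑ e, (if e = p then (1:K) else 0) * f e = f p := by
  simp [ite_mul]

lemma sum_chi_mul (ia ib : Fin m) (j1 j0 : Fin n) (f : Fin m × Fin n → K) :
    ∑ e, chi K ia ib j1 j0 e * f e
      = f (ia, j1) - f (ib, j1) + f (ib, j0) - f (ia, j0) := by
  simp [chi, sub_mul, add_mul, Finset.sum_sub_distrib, Finset.sum_add_distrib, ite_mul]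

lemma chi_bracket_row {h : ℕ} (c : Fin m × Fin n → Fin h → K) (ia ib : Fin m)
    (j1 j0 : Fin n) (i : Fin m) :
    gridH K m n h c (Sum.inl i) (ia, j1) - gridH K m n h c (Sum.inl i) (ib, j1)
      + gridH K m n h c (Sum.inl i) (ib, j0) - gridH K m n h c (Sum.inl i) (ia, j0) = 0 := by
  simp only [gridH, Matrix.of_apply, Sum.elim_inl]
  exact (fun (x y : K) => by ring : ∀ x y : K, x - y + y - x = 0) _ _

lemma chi_bracket_col {h : ℕ} (c : Fin m × Fin n → Fin h → K) (ia ib : Fin m)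
    (j1 j0 : Fin n) (j : Fin (n-1)) :
    gridH K m n h c (Sum.inr (Sum.inl j)) (ia, j1)
      - gridH K m n h c (Sum.inr (Sum.inl j)) (ib, j1)
      + gridH K m n h c (Sum.inr (Sum.inl j)) (ib, j0)
      - gridH K m n h c (Sum.inr (Sum.inl j)) (ia, j0) = 0 := by
  simp only [gridH, Matrix.of_apply, Sum.elim_inr, Sum.elim_inl]
  exact (fun (x y : K) => by ring : ∀ x y : K, x - x + y - y = 0) _ _

end Chi


/-- Theorem 4.5, near-monotonicity in `h`.  Let `h ≥ h' ≥ 1`,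
`m ≥ 4` and `n ≥ h - h' + 3`.  If an MR `(m, n, a=1, b=1, h)` grid code exists over
`F_q`, then an MR `(m-2, n-(h-h'+1), a=1, b=1, h')` grid code exists over the same
field, so `q(m, n, 1, 1, h) ≥ q(m-2, n-h+h'-1, 1, 1, h')`. -/
theorem statement12 (m n h h' : ℕ) (hh'pos : 1 ≤ h') (hh' : h' ≤ h)
    (hm : 4 ≤ m) (hn : h - h' + 3 ≤ n)
    (F : Type*) [Field F] [Fintype F]
    (hex : ∃ c : Fin m × Fin n → Fin h → F, IsMR F m n h c) :
    ∃ c' : Fin (m - 2) × Fin (n - (h - h' + 1)) → Fin h' → F,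
      IsMR F (m - 2) (n - (h - h' + 1)) h' c' := by
  classical
  obtain ⟨c, hMR⟩ := hex
  set d := h - h' with hd
  have hm2 : 2 ≤ m - 2 := by omega
  have hn2 : 2 ≤ n - (d + 1) := by omega
  have hnd : n - (d + 1) + (d + 1) = n := by omega
  -- special rows and columns
  have hm2' : m - 2 < m := by omega
  have hm1' : m - 1 < m := by omega
  set ia : Fin m := ⟨m - 2, hm2'⟩ with hia
  set ib : Fin m := ⟨m - 1, hm1'⟩ with hib
  have hjc : ∀ t : Fin (d + 1), n - (d + 1) + t.val < n := fun t => by omega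
  set js : Fin (d + 1) → Fin n := fun t => ⟨n - (d + 1) + t.val, hjc t⟩ with hjs
  have hjsinj : Function.Injective js := by
    intro a b hab
    have := congrArg Fin.val hab
    simp only [hjs] at this
    exact Fin.ext (by omega)
  have hiaib : ia ≠ ib := by simp [hia, hib, Fin.ext_iff]; omega
  -- cycle sum vectors
  set v : Fin d → Fin h → F := fun t k =>
    c (ia, js t.succ) k - c (ib, js t.succ) k + c (ib, js 0) k - c (ia, js 0) k with hv
  -- the finsets U, Ft, U'
  set U : Finset (Fin m × Fin n) :=
    ({ia, ib} : Finset (Fin m)) ×ˢ (Finset.univ.image js) with hU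
  set Ft : Finset (Fin m × Fin n) :=
    Finset.univ.image (fun t : Fin d => (ib, js t.succ)) with hFt
  set U' : Finset (Fin m × Fin n) := U \ Ft with hU'
  have hFtU : Ft ⊆ U := by
    intro e he
    obtain ⟨t, _, rfl⟩ := Finset.mem_image.mp he
    simp [hU, Finset.mem_product]
  have hUdec : U = U' ∪ Ft := (Finset.sdiff_union_of_subset hFtU).symm
  have hU'acyc : IsAcyclicEdges U' := by
    apply star_acyclic (ia := ia) (ib := ib) (j0 := js 0)
    · intro e he
      have heU := (Finset.mem_sdiff.mp he).1
      rw [hU, Finset.mem_product] at heU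
      have := heU.1
      simp only [Finset.mem_insert, Finset.mem_singleton] at this
      exact this
    · intro e he h1
      obtain ⟨heU, heFt⟩ := Finset.mem_sdiff.mp he
      rw [hU, Finset.mem_product] at heU
      obtain ⟨u, _, hu⟩ := Finset.mem_image.mp heU.2
      by_contra hne
      -- e = (ib, js u) with js u ≠ js 0, so u ≠ 0, so e ∈ Ft
      have hu0 : u ≠ 0 := by
        rintro rfl
        exact hne (by rw [← hu])
      apply heFt
      rw [hFt, Finset.mem_image]
      refine ⟨(u.pred hu0), Finset.mem_univ _, ?_⟩
      rw [Fin.succ_pred]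
      exact Prod.ext h1.symm hu
  -- Step 1 : linear independence of v
  have hmemU : ∀ (r : Fin m), (r = ia ∨ r = ib) → ∀ u : Fin (d+1), (r, js u) ∈ U := by
    intro r hr u
    rw [hU, Finset.mem_product]
    constructor
    · simp only [Finset.mem_insert, Finset.mem_singleton]; exact hr
    · exact Finset.mem_image.mpr ⟨u, Finset.mem_univ _, rfl⟩
  have hFtcard : Ft.card ≤ d := by
    rw [hFt]
    calc (Finset.univ.image (fun t : Fin d => (ib, js t.succ))).card
        ≤ (Finset.univ : Finset (Fin d)).card := Finset.card_image_le
      _ = d := by simp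
  have hvindep : LinearIndependent F v := by
    rw [Fintype.linearIndependent_iff]
    intro μ hμ t₀
    set w : Fin m × Fin n → F := fun e => ∑ t, μ t * chi F ia ib (js t.succ) (js 0) e with hw
    have hrk := hMR U ⟨U', Ft, hU'acyc, le_trans hFtcard (by omega), hUdec⟩
    rw [rank_eq_card_iff_indep] at hrk
    have hw0 : w = 0 := by
      apply hrk w
      · intro e heU
        rw [hw]
        apply Finset.sum_eq_zero
        intro t _
        have h1 : e ≠ (ia, js t.succ) := fun hh => heU (hh ▸ hmemU ia (Or.inl rfl) t.succ)
        have h2 : e ≠ (ib, js t.succ) := fun hh => heU (hh ▸ hmemU ib (Or.inr rfl) t.succ)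
        have h3 : e ≠ (ib, js 0) := fun hh => heU (hh ▸ hmemU ib (Or.inr rfl) 0)
        have h4 : e ≠ (ia, js 0) := fun hh => heU (hh ▸ hmemU ia (Or.inl rfl) 0)
        rw [chi, if_neg h1, if_neg h2, if_neg h3, if_neg h4]
        ring
      · intro r
        have hswap : ∑ e, w e * gridH F m n h c r e
            = ∑ t, μ t * (∑ e, chi F ia ib (js t.succ) (js 0) e * gridH F m n h c r e) := by
          rw [hw]
          simp only [Finset.sum_mul]
          rw [Finset.sum_comm]
          congr 1
          funext t
          rw [Finset.mul_sum]
          congr 1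
          funext e
          ring
        rw [hswap]
        rcases r with i | j | k
        · apply Finset.sum_eq_zero
          intro t _
          rw [sum_chi_mul, chi_bracket_row, mul_zero]
        · apply Finset.sum_eq_zero
          intro t _
          rw [sum_chi_mul, chi_bracket_col, mul_zero]
        · have hck : ∀ e, gridH F m n h c (Sum.inr (Sum.inr k)) e = c e k := fun e => rfl
          have : ∀ t : Fin d, (∑ e, chi F ia ib (js t.succ) (js 0) e
              * gridH F m n h c (Sum.inr (Sum.inr k)) e) = v t k := by
            intro t
            rw [sum_chi_mul]
            simp only [hck, hv]
          simp only [this]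
          have := congrFun hμ k
          simpa [Finset.sum_apply] using this
    have heval := congrFun hw0 (ia, js t₀.succ)
    rw [hw] at heval
    simp only [Pi.zero_apply] at heval
    rw [Finset.sum_eq_single t₀] at heval
    · rw [chi, if_pos rfl] at heval
      rw [if_neg (fun hh : ((ia, js t₀.succ) : Fin m × Fin n) = (ib, js t₀.succ)
          => hiaib (congrArg Prod.fst hh))] at heval
      rw [if_neg (fun hh : ((ia, js t₀.succ) : Fin m × Fin n) = (ib, js 0)
          => hiaib (congrArg Prod.fst hh))] at heval
      rw [if_neg (fun hh : ((ia, js t₀.succ) : Fin m × Fin n) = (ia, js 0)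
          => Fin.succ_ne_zero t₀ (hjsinj (congrArg Prod.snd hh)))] at heval
      simpa using heval
    · intro t _ htne
      have h1 : ((ia, js t₀.succ) : Fin m × Fin n) ≠ (ia, js t.succ) := by
        intro hh
        apply htne
        have := hjsinj (congrArg Prod.snd hh)
        exact (Fin.succ_injective _ this).symm
      have h2 : ((ia, js t₀.succ) : Fin m × Fin n) ≠ (ib, js t.succ) :=
        fun hh => hiaib (congrArg Prod.fst hh)
      have h3 : ((ia, js t₀.succ) : Fin m × Fin n) ≠ (ib, js 0) :=
        fun hh => hiaib (congrArg Prod.fst hh)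
      have h4 : ((ia, js t₀.succ) : Fin m × Fin n) ≠ (ia, js 0) :=
        fun hh => Fin.succ_ne_zero t₀ (hjsinj (congrArg Prod.snd hh))
      rw [chi, if_neg h1, if_neg h2, if_neg h3, if_neg h4]
      ring
    · intro htne
      exact absurd (Finset.mem_univ t₀) htne
  -- Step 2 : the projection π
  set V : Submodule F (Fin h → F) := Submodule.span F (Set.range v) with hV
  have hVrank : Module.finrank F V = d := by
    rw [finrank_span_eq_card hvindep, Fintype.card_fin]
  have hQrank : Module.finrank F ((Fin h → F) ⧸ V) = h' := by
    have := Submodule.finrank_quotient_add_finrank V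
    rw [hVrank, Module.finrank_fintype_fun_eq_card, Fintype.card_fin] at this
    omega
  obtain ⟨iso⟩ : Nonempty (((Fin h → F) ⧸ V) ≃ₗ[F] (Fin h' → F)) := by
    apply FiniteDimensional.nonempty_linearEquiv_of_finrank_eq
    rw [hQrank, Module.finrank_fintype_fun_eq_card, Fintype.card_fin]
  set π : (Fin h → F) →ₗ[F] (Fin h' → F) := iso.toLinearMap ∘ₗ V.mkQ with hπ
  have hkerπ : ∀ s, π s = 0 → s ∈ V := by
    intro s hs
    rw [hπ] at hs
    simp only [LinearMap.comp_apply, LinearEquiv.coe_coe, LinearEquiv.map_eq_zero_iff] at hs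
    rwa [Submodule.mkQ_apply, Submodule.Quotient.mk_eq_zero] at hs
  -- the embedding
  have hrowlt : ∀ i : Fin (m - 2), i.val < m := fun i => by omega
  have hcollt : ∀ j : Fin (n - (d + 1)), j.val < n := fun j => by omega
  set emb : Fin (m - 2) × Fin (n - (d + 1)) → Fin m × Fin n :=
    fun p => (⟨p.1.val, hrowlt p.1⟩, ⟨p.2.val, hcollt p.2⟩) with hemb
  have hembinj : Function.Injective emb := by
    intro p q hpq
    rw [hemb, Prod.ext_iff] at hpq
    obtain ⟨h1, h2⟩ := hpq
    exact Prod.ext (Fin.ext (by simpa [Fin.ext_iff] using h1))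
      (Fin.ext (by simpa [Fin.ext_iff] using h2))
  refine ⟨fun p k => π (c (emb p)) k, ?_⟩
  intro E ⟨E', F', hE'a, hF'c, hEd⟩
  rw [rank_eq_card_iff_indep]
  intro x' hsupp hchk
  by_contra hx'ne
  obtain ⟨p₀, hp₀⟩ := Function.ne_iff.mp hx'ne
  -- row sums of x' vanish
  have hrow : ∀ i' : Fin (m-2), ∑ p, x' p * (if p.1 = i' then (1:F) else 0) = 0 := by
    intro i'
    have := hchk (Sum.inl i')
    simpa only [gridH, Matrix.of_apply, Sum.elim_inl] using this
  have hcol : ∀ j : Fin (n-(d+1)-1),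
      ∑ p, x' p * (if (p.2:ℕ) = (j:ℕ) then (1:F) else 0) = 0 := by
    intro j
    have := hchk (Sum.inr (Sum.inl j))
    simpa only [gridH, Matrix.of_apply, Sum.elim_inr, Sum.elim_inl] using this
  have hglob : ∀ k' : Fin h', ∑ p, x' p * π (c (emb p)) k' = 0 := by
    intro k'
    have := hchk (Sum.inr (Sum.inr k'))
    simpa only [gridH, Matrix.of_apply, Sum.elim_inr] using this
  have htot : ∑ p, x' p = 0 := by
    have h1 : ∑ i' : Fin (m-2), ∑ p, x' p * (if p.1 = i' then (1:F) else 0)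
        = ∑ p, x' p := by
      rw [Finset.sum_comm]
      apply Finset.sum_congr rfl
      intro p _
      rw [← Finset.mul_sum]
      simp
    rw [← h1]
    exact Finset.sum_eq_zero fun i' _ => hrow i'
  have hcoln : ∀ jn : ℕ, jn < n - (d+1) →
      ∑ p, x' p * (if (p.2:ℕ) = jn then (1:F) else 0) = 0 := by
    intro jn hjn
    rcases Nat.lt_or_ge jn (n - (d+1) - 1) with hlt | hge
    · exact hcol ⟨jn, hlt⟩
    · have hjn' : jn = n - (d+1) - 1 := by omega
      subst hjn'
      have h2 : ∑ q ∈ Finset.range (n - (d+1)),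
          (∑ p, x' p * (if (p.2:ℕ) = q then (1:F) else 0)) = ∑ p, x' p := by
        rw [Finset.sum_comm]
        apply Finset.sum_congr rfl
        intro p _
        rw [← Finset.mul_sum]
        have : ∑ q ∈ Finset.range (n - (d+1)),
            (if (p.2:ℕ) = q then (1:F) else 0) = 1 := by
          rw [Finset.sum_ite_eq]
          simp [Finset.mem_range, p.2.isLt]
        rw [this, mul_one]
      have hmem : n - (d+1) - 1 ∈ Finset.range (n - (d+1)) := Finset.mem_range.mpr hjn
      have h6 := Finset.add_sum_erase _
        (fun q => ∑ p, x' p * (if (p.2:ℕ) = q then (1:F) else 0)) hmem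
      have h5 : ∑ q ∈ (Finset.range (n-(d+1))).erase (n-(d+1)-1),
          (∑ p, x' p * (if (p.2:ℕ) = q then (1:F) else 0)) = 0 := by
        apply Finset.sum_eq_zero
        intro q hq
        obtain ⟨hq1, hq2⟩ := Finset.mem_erase.mp hq
        have hq3 := Finset.mem_range.mp hq2
        exact hcol ⟨q, by omega⟩
      rw [h5, add_zero, h2] at h6
      exact h6.trans htot
  -- the global sum vector and its coefficients
  set s : Fin h → F := fun k => ∑ p, x' p * c (emb p) k with hs
  have hπs : π s = 0 := by
    have hss : s = ∑ p, x' p • c (emb p) := by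
      funext k
      rw [Finset.sum_apply]
      simp [hs]
    rw [hss, map_sum]
    simp only [map_smul]
    funext k'
    rw [Finset.sum_apply]
    simp only [Pi.smul_apply, smul_eq_mul]
    exact hglob k'
  obtain ⟨lam, hlam⟩ := (Submodule.mem_span_range_iff_exists_fun F).mp (hkerπ s hπs)
  -- the big error vector
  set x : Fin m × Fin n → F := fun e =>
    (∑ p, x' p * (if e = emb p then (1:F) else 0))
      - ∑ t, lam t * chi F ia ib (js t.succ) (js 0) e with hx
  -- the big pattern and its decomposition
  haveI : Nonempty (Fin (m-2)) := ⟨⟨0, by omega⟩⟩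
  haveI : Nonempty (Fin (n-(d+1))) := ⟨⟨0, by omega⟩⟩
  have hembacyc : IsAcyclicEdges (E'.image emb) := by
    have := image_acyclic (σ := fun i : Fin (m-2) => (⟨i.val, hrowlt i⟩ : Fin m))
      (τ := fun j : Fin (n-(d+1)) => (⟨j.val, hcollt j⟩ : Fin n))
      (fun a b hab => Fin.ext (by simpa [Fin.ext_iff] using hab))
      (fun a b hab => Fin.ext (by simpa [Fin.ext_iff] using hab)) hE'a
    exact this
  have hbigacyc : IsAcyclicEdges ((E'.image emb) ∪ U') := by
    apply union_acyclic_of_separated (fun i => i.val < m - 2) (fun j => j.val < n - (d+1))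
    · intro e he
      obtain ⟨p, _, rfl⟩ := Finset.mem_image.mp he
      exact ⟨p.1.isLt, p.2.isLt⟩
    · intro e he
      have heU := (Finset.mem_sdiff.mp he).1
      rw [hU, Finset.mem_product] at heU
      obtain ⟨u, _, hu⟩ := Finset.mem_image.mp heU.2
      have h1 := heU.1
      simp only [Finset.mem_insert, Finset.mem_singleton] at h1
      constructor
      · rcases h1 with h1 | h1 <;> rw [h1] <;> simp [hia, hib] <;> omega
      · rw [← hu]
        simp [hjs]
    · exact hembacyc
    · exact hU'acyc
  have hEbigdec : (E.image emb) ∪ U = ((E'.image emb) ∪ U') ∪ ((F'.image emb) ∪ Ft) := by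
    rw [hEd, Finset.image_union, hUdec, Finset.union_union_union_comm]
  have hFcard : ((F'.image emb) ∪ Ft).card ≤ h := by
    have h1 := Finset.card_union_le (F'.image emb) Ft
    have h2 := Finset.card_image_le (s := F') (f := emb)
    omega
  have hrk := hMR ((E.image emb) ∪ U) ⟨(E'.image emb) ∪ U', (F'.image emb) ∪ Ft,
    hbigacyc, hFcard, hEbigdec⟩
  rw [rank_eq_card_iff_indep] at hrk
  have hx0 : x = 0 := by
    apply hrk x
    · -- support
      intro e he
      have heI : e ∉ E.image emb := fun hh => he (Finset.mem_union_left _ hh)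
      have heU : e ∉ U := fun hh => he (Finset.mem_union_right _ hh)
      simp only [hx]
      have hA : (∑ p, x' p * (if e = emb p then (1:F) else 0)) = 0 := by
        apply Finset.sum_eq_zero
        intro p _
        by_cases hep : e = emb p
        · have hpE : p ∉ E := fun hh =>
            heI (Finset.mem_image.mpr ⟨p, hh, hep.symm⟩)
          rw [hsupp p hpE, zero_mul]
        · rw [if_neg hep, mul_zero]
      have hB : (∑ t, lam t * chi F ia ib (js t.succ) (js 0) e) = 0 := by
        apply Finset.sum_eq_zero
        intro t _
        have h1 : e ≠ (ia, js t.succ) := fun hh => heU (hh ▸ hmemU ia (Or.inl rfl) t.succ)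
        have h2 : e ≠ (ib, js t.succ) := fun hh => heU (hh ▸ hmemU ib (Or.inr rfl) t.succ)
        have h3 : e ≠ (ib, js 0) := fun hh => heU (hh ▸ hmemU ib (Or.inr rfl) 0)
        have h4 : e ≠ (ia, js 0) := fun hh => heU (hh ▸ hmemU ia (Or.inl rfl) 0)
        rw [chi, if_neg h1, if_neg h2, if_neg h3, if_neg h4]
        ring
      rw [hA, hB, sub_zero]
    · -- checks
      intro r
      have hsplit : ∑ e, x e * gridH F m n h c r e
          = (∑ p, x' p * gridH F m n h c r (emb p))
            - ∑ t, lam t * (gridH F m n h c r (ia, js t.succ)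
                - gridH F m n h c r (ib, js t.succ)
                + gridH F m n h c r (ib, js 0)
                - gridH F m n h c r (ia, js 0)) := by
        simp only [hx]
        simp only [sub_mul, Finset.sum_sub_distrib]
        congr 1
        · simp only [Finset.sum_mul]
          rw [Finset.sum_comm]
          apply Finset.sum_congr rfl
          intro p _
          rw [← sum_delta_mul (emb p) (fun e => gridH F m n h c r e), Finset.mul_sum]
          apply Finset.sum_congr rfl
          intro e _
          ring
        · simp only [Finset.sum_mul]
          rw [Finset.sum_comm]
          apply Finset.sum_congr rfl
          intro t _
          rw [← sum_chi_mul ia ib (js t.succ) (js 0) (fun e => gridH F m n h c r e),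
            Finset.mul_sum]
          apply Finset.sum_congr rfl
          intro e _
          ring
      rw [hsplit]
      rcases r with i | j | k
      · have hB : ∀ t : Fin d, (gridH F m n h c (Sum.inl i) (ia, js t.succ)
            - gridH F m n h c (Sum.inl i) (ib, js t.succ)
            + gridH F m n h c (Sum.inl i) (ib, js 0)
            - gridH F m n h c (Sum.inl i) (ia, js 0)) = 0 :=
          fun t => chi_bracket_row c ia ib (js t.succ) (js 0) i
        simp only [hB, mul_zero, Finset.sum_const_zero, sub_zero]
        by_cases hi : i.val < m - 2
        · have heq : ∀ p : Fin (m-2) × Fin (n-(d+1)),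
              gridH F m n h c (Sum.inl i) (emb p)
                = (if p.1 = (⟨i.val, hi⟩ : Fin (m-2)) then (1:F) else 0) := by
            intro p
            simp only [gridH, Matrix.of_apply, Sum.elim_inl, hemb]
            by_cases hpi : p.1 = (⟨i.val, hi⟩ : Fin (m-2))
            · rw [if_pos hpi, if_pos (Fin.ext (by simp [hpi]))]
            · rw [if_neg hpi, if_neg (fun hh => hpi (Fin.ext (by
                have := congrArg Fin.val hh
                simpa using this)))]
          simp only [heq]
          exact hrow ⟨i.val, hi⟩
        · apply Finset.sum_eq_zero
          intro p _
          have : ((⟨p.1.val, hrowlt p.1⟩ : Fin m) : Fin m) ≠ i := fun hh => by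
            have := congrArg Fin.val hh
            simp at this
            omega
          simp only [gridH, Matrix.of_apply, Sum.elim_inl, hemb]
          rw [if_neg this, mul_zero]
      · have hB : ∀ t : Fin d, (gridH F m n h c (Sum.inr (Sum.inl j)) (ia, js t.succ)
            - gridH F m n h c (Sum.inr (Sum.inl j)) (ib, js t.succ)
            + gridH F m n h c (Sum.inr (Sum.inl j)) (ib, js 0)
            - gridH F m n h c (Sum.inr (Sum.inl j)) (ia, js 0)) = 0 :=
          fun t => chi_bracket_col c ia ib (js t.succ) (js 0) j
        simp only [hB, mul_zero, Finset.sum_const_zero, sub_zero]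
        by_cases hj : (j : ℕ) < n - (d+1)
        · have heq : ∀ p : Fin (m-2) × Fin (n-(d+1)),
              gridH F m n h c (Sum.inr (Sum.inl j)) (emb p)
                = (if (p.2 : ℕ) = (j : ℕ) then (1:F) else 0) := by
            intro p
            simp only [gridH, Matrix.of_apply, Sum.elim_inr, Sum.elim_inl, hemb]
          simp only [heq]
          exact hcoln (j : ℕ) hj
        · apply Finset.sum_eq_zero
          intro p _
          have hne : ¬ ((p.2 : ℕ) = (j : ℕ)) := by
            have := p.2.isLt
            omega
          simp only [gridH, Matrix.of_apply, Sum.elim_inr, Sum.elim_inl, hemb]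
          rw [if_neg hne, mul_zero]
      · have hA : (∑ p, x' p * gridH F m n h c (Sum.inr (Sum.inr k)) (emb p)) = s k := rfl
        have hB : (∑ t, lam t * (gridH F m n h c (Sum.inr (Sum.inr k)) (ia, js t.succ)
            - gridH F m n h c (Sum.inr (Sum.inr k)) (ib, js t.succ)
            + gridH F m n h c (Sum.inr (Sum.inr k)) (ib, js 0)
            - gridH F m n h c (Sum.inr (Sum.inr k)) (ia, js 0))) = s k := by
          have := congrFun hlam k
          rw [Finset.sum_apply] at this
          simp only [Pi.smul_apply, smul_eq_mul] at this
          exact this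
        rw [hA, hB, sub_self]
  -- contradiction
  have heval := congrFun hx0 (emb p₀)
  simp only [hx] at heval
  simp only [Pi.zero_apply] at heval
  have hA : (∑ p, x' p * (if emb p₀ = emb p then (1:F) else 0)) = x' p₀ := by
    rw [Finset.sum_eq_single p₀]
    · rw [if_pos rfl, mul_one]
    · intro p _ hne
      rw [if_neg (fun hh => hne (hembinj hh).symm), mul_zero]
    · intro hh
      exact absurd (Finset.mem_univ p₀) hh
  have hB : (∑ t, lam t * chi F ia ib (js t.succ) (js 0) (emb p₀)) = 0 := by
    apply Finset.sum_eq_zero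
    intro t _
    have hfst : ∀ u : Fin (d+1), ∀ r : Fin m, m - 2 ≤ r.val →
        emb p₀ ≠ (r, js u) := by
      intro u r hr hh
      have := congrArg (fun q => (Prod.fst q).val) hh
      simp only [hemb] at this
      have hlt := p₀.1.isLt
      omega
    rw [chi, if_neg (hfst t.succ ia (by simp [hia])),
      if_neg (hfst t.succ ib (by simp [hib]; omega)),
      if_neg (hfst 0 ib (by simp [hib]; omega)),
      if_neg (hfst 0 ia (by simp [hia]))]
    ring
  rw [hA, hB, sub_zero] at heval
  exact hp₀ heval
end

section
/- Let m ≤ n both be powers of two with m ≥ 2, and suppose there exists an MR (m, m, a=1, b=1, h=1) grid code over a field F_{q_m} where q_m is a power of two. Then there exists an MR (m, n, a=1, b=1, h=1) grid code over the field F_q with q = (n/m)^{m−1} · q_m (a power of two). -/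
open Finset

set_option linter.unusedSectionVars false
namespace S14

/-- The edge set of the cycle parametrized by `k, I, J`. -/
def cyc {m n : ℕ} (k : ℕ) (I : ℕ → Fin m) (J : ℕ → Fin n) : Finset (Fin m × Fin n) :=
  ((Finset.range k).image fun ℓ => (I ℓ, J ℓ)) ∪
  ((Finset.range k).image fun ℓ => (I ((ℓ + 1) % k), J ℓ))

lemma succ_mod_lt {k ℓ : ℕ} (hk : 0 < k) : (ℓ + 1) % k < k := Nat.mod_lt _ hk

lemma succ_mod_eq {k ℓ : ℕ} (hℓ : ℓ < k) : (ℓ + 1) % k = if ℓ + 1 = k then 0 else ℓ + 1 := by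
  by_cases h : ℓ + 1 = k
  · rw [if_pos h, h, Nat.mod_self]
  · rw [if_neg h]; exact Nat.mod_eq_of_lt (by omega)

lemma succ_mod_ne {k ℓ : ℕ} (hk : 2 ≤ k) (hℓ : ℓ < k) : (ℓ + 1) % k ≠ ℓ := by
  rw [succ_mod_eq hℓ]; split <;> omega

lemma succ_mod_inj {k ℓ ℓ' : ℕ} (hℓ : ℓ < k) (hℓ' : ℓ' < k)
    (h : (ℓ + 1) % k = (ℓ' + 1) % k) : ℓ = ℓ' := by
  rw [succ_mod_eq hℓ, succ_mod_eq hℓ'] at h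
  split at h <;> split at h <;> omega

lemma prev_lt {k ℓ : ℕ} (hk : 0 < k) : (ℓ + (k - 1)) % k < k := Nat.mod_lt _ hk

lemma succ_prev {k ℓ : ℕ} (hk : 0 < k) (hℓ : ℓ < k) : ((ℓ + (k - 1)) % k + 1) % k = ℓ := by
  conv_lhs => rw [Nat.mod_add_mod]
  have : ℓ + (k - 1) + 1 = ℓ + k := by omega
  rw [this, Nat.add_mod_right, Nat.mod_eq_of_lt hℓ]

lemma mem_cyc {m n : ℕ} {k : ℕ} {I : ℕ → Fin m} {J : ℕ → Fin n} {e : Fin m × Fin n} :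
    e ∈ cyc k I J ↔ ∃ ℓ < k, e = (I ℓ, J ℓ) ∨ e = (I ((ℓ + 1) % k), J ℓ) := by
  simp only [cyc, mem_union, mem_image, mem_range]
  constructor
  · rintro (⟨ℓ, hℓ, rfl⟩ | ⟨ℓ, hℓ, rfl⟩)
    · exact ⟨ℓ, hℓ, Or.inl rfl⟩
    · exact ⟨ℓ, hℓ, Or.inr rfl⟩
  · rintro ⟨ℓ, hℓ, rfl | rfl⟩
    · exact Or.inl ⟨ℓ, hℓ, rfl⟩
    · exact Or.inr ⟨ℓ, hℓ, rfl⟩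

section FilterLemmas
variable {m n : ℕ} {k : ℕ} {I : ℕ → Fin m} {J : ℕ → Fin n}
  (hk : 2 ≤ k) (hI : Set.InjOn I (Set.Iio k)) (hJ : Set.InjOn J (Set.Iio k))

include hk hI hJ

lemma filterL_cyc {ℓ0 : ℕ} (hℓ0 : ℓ0 < k) :
    (cyc k I J).filter (fun e => e.1 = I ℓ0) =
      {(I ℓ0, J ℓ0), (I ℓ0, J ((ℓ0 + (k - 1)) % k))} := by
  have hk0 : 0 < k := by omega
  ext e
  simp only [mem_filter, mem_cyc, mem_insert, mem_singleton]
  constructor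
  · rintro ⟨⟨ℓ, hℓ, rfl | rfl⟩, h1⟩
    · simp only at h1
      have : ℓ = ℓ0 := hI hℓ hℓ0 h1
      subst this; exact Or.inl rfl
    · simp only at h1
      have h2 : (ℓ + 1) % k = ℓ0 := hI (succ_mod_lt hk0) hℓ0 h1
      have h3 : ℓ = (ℓ0 + (k - 1)) % k := by
        apply succ_mod_inj hℓ (prev_lt hk0)
        rw [h2, succ_prev hk0 hℓ0]
      subst h3; rw [h1]; exact Or.inr rfl
  · rintro (rfl | rfl)
    · exact ⟨⟨ℓ0, hℓ0, Or.inl rfl⟩, rfl⟩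
    · refine ⟨⟨(ℓ0 + (k - 1)) % k, prev_lt hk0, Or.inr ?_⟩, rfl⟩
      rw [succ_prev hk0 hℓ0]

lemma filterL_cyc_card {ℓ0 : ℕ} (hℓ0 : ℓ0 < k) :
    ((cyc k I J).filter (fun e => e.1 = I ℓ0)).card = 2 := by
  rw [filterL_cyc hk hI hJ hℓ0]
  have hne : ℓ0 ≠ (ℓ0 + (k - 1)) % k := by
    intro h
    have := succ_prev (by omega : 0 < k) hℓ0
    rw [← h] at this
    exact succ_mod_ne hk hℓ0 this
  rw [card_insert_of_notMem, card_singleton]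
  simp only [mem_singleton, Prod.mk.injEq]
  rintro ⟨-, h2⟩
  exact hne (hJ hℓ0 (prev_lt (by omega)) h2)

lemma filterR_cyc {ℓ0 : ℕ} (hℓ0 : ℓ0 < k) :
    (cyc k I J).filter (fun e => e.2 = J ℓ0) =
      {(I ℓ0, J ℓ0), (I ((ℓ0 + 1) % k), J ℓ0)} := by
  have hk0 : 0 < k := by omega
  ext e
  simp only [mem_filter, mem_cyc, mem_insert, mem_singleton]
  constructor
  · rintro ⟨⟨ℓ, hℓ, rfl | rfl⟩, h1⟩
    · simp only at h1
      have : ℓ = ℓ0 := hJ hℓ hℓ0 h1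
      subst this; exact Or.inl rfl
    · simp only at h1
      have : ℓ = ℓ0 := hJ hℓ hℓ0 h1
      subst this; exact Or.inr rfl
  · rintro (rfl | rfl)
    · exact ⟨⟨ℓ0, hℓ0, Or.inl rfl⟩, rfl⟩
    · exact ⟨⟨ℓ0, hℓ0, Or.inr rfl⟩, rfl⟩

lemma filterR_cyc_card {ℓ0 : ℕ} (hℓ0 : ℓ0 < k) :
    ((cyc k I J).filter (fun e => e.2 = J ℓ0)).card = 2 := by
  rw [filterR_cyc hk hI hJ hℓ0]
  rw [card_insert_of_notMem, card_singleton]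
  simp only [mem_singleton, Prod.mk.injEq]
  rintro ⟨h1, -⟩
  exact succ_mod_ne hk hℓ0 ((hI hℓ0 (succ_mod_lt (by omega)) h1).symm)

lemma cyc_disjoint :
    Disjoint ((Finset.range k).image fun ℓ => (I ℓ, J ℓ))
      ((Finset.range k).image fun ℓ => (I ((ℓ + 1) % k), J ℓ)) := by
  rw [Finset.disjoint_left]
  simp only [mem_image, mem_range]
  rintro e ⟨ℓ, hℓ, rfl⟩ ⟨ℓ', hℓ', he⟩
  rw [Prod.mk.injEq] at he
  have : ℓ' = ℓ := hJ hℓ' hℓ he.2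
  subst this
  exact succ_mod_ne hk hℓ' (hI (succ_mod_lt (by omega)) hℓ' he.1)

lemma sum_cyc {A : Type*} [AddCommMonoid A] (g : Fin m × Fin n → A) :
    ∑ e ∈ cyc k I J, g e =
      (∑ ℓ ∈ Finset.range k, g (I ℓ, J ℓ)) +
      (∑ ℓ ∈ Finset.range k, g (I ((ℓ + 1) % k), J ℓ)) := by
  rw [cyc, Finset.sum_union (cyc_disjoint hk hI hJ)]
  congr 1
  · rw [Finset.sum_image]
    intro a ha b hb hab
    rw [Prod.mk.injEq] at hab
    exact hJ (by simpa using ha) (by simpa using hb) hab.2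
  · rw [Finset.sum_image]
    intro a ha b hb hab
    rw [Prod.mk.injEq] at hab
    exact hJ (by simpa using ha) (by simpa using hb) hab.2

end FilterLemmas

lemma cyc_nonempty {m n : ℕ} {k : ℕ} (hk : 2 ≤ k) (I : ℕ → Fin m) (J : ℕ → Fin n) :
    (I 0, J 0) ∈ cyc k I J := by
  rw [mem_cyc]; exact ⟨0, by omega, Or.inl rfl⟩

section Subcycle
variable {m n : ℕ} {k k' : ℕ} {I I' : ℕ → Fin m} {J J' : ℕ → Fin n}
  (hk : 2 ≤ k) (hI : Set.InjOn I (Set.Iio k)) (hJ : Set.InjOn J (Set.Iio k))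
  (hk' : 2 ≤ k') (hI' : Set.InjOn I' (Set.Iio k')) (hJ' : Set.InjOn J' (Set.Iio k'))
  (hsub : cyc k' I' J' ⊆ cyc k I J)

include hk hI hJ hk' hI' hJ' hsub

lemma closedL {e e' : Fin m × Fin n} (he : e ∈ cyc k' I' J') (he' : e' ∈ cyc k I J)
    (h1 : e'.1 = e.1) : e' ∈ cyc k' I' J' := by
  -- e.1 is of the form I' ℓ'' with ℓ'' < k'
  obtain ⟨ℓ'', hℓ'', hfst⟩ : ∃ ℓ'' < k', e.1 = I' ℓ'' := by
    rw [mem_cyc] at he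
    obtain ⟨ℓ, hℓ, rfl | rfl⟩ := he
    · exact ⟨ℓ, hℓ, rfl⟩
    · exact ⟨(ℓ + 1) % k', succ_mod_lt (by omega), rfl⟩
  -- e.1 is also of the form I ℓ1 with ℓ1 < k
  obtain ⟨ℓ1, hℓ1, hfst1⟩ : ∃ ℓ1 < k, e.1 = I ℓ1 := by
    have heC := hsub he
    rw [mem_cyc] at heC
    obtain ⟨ℓ, hℓ, h | h⟩ := heC
    · exact ⟨ℓ, hℓ, by rw [h]⟩
    · exact ⟨(ℓ + 1) % k, succ_mod_lt (by omega), by rw [h]⟩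
  have key : (cyc k' I' J').filter (fun x => x.1 = e.1) =
      (cyc k I J).filter (fun x => x.1 = e.1) := by
    apply Finset.eq_of_subset_of_card_le
    · exact Finset.filter_subset_filter _ hsub
    · rw [hfst1] at hfst ⊢
      rw [filterL_cyc_card hk hI hJ hℓ1, hfst, filterL_cyc_card hk' hI' hJ' hℓ'']
  have : e' ∈ (cyc k I J).filter (fun x => x.1 = e.1) := Finset.mem_filter.2 ⟨he', h1⟩
  rw [← key] at this
  exact (Finset.mem_filter.1 this).1

lemma closedR {e e' : Fin m × Fin n} (he : e ∈ cyc k' I' J') (he' : e' ∈ cyc k I J)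
    (h1 : e'.2 = e.2) : e' ∈ cyc k' I' J' := by
  obtain ⟨ℓ'', hℓ'', hfst⟩ : ∃ ℓ'' < k', e.2 = J' ℓ'' := by
    rw [mem_cyc] at he
    obtain ⟨ℓ, hℓ, rfl | rfl⟩ := he
    · exact ⟨ℓ, hℓ, rfl⟩
    · exact ⟨ℓ, hℓ, rfl⟩
  obtain ⟨ℓ1, hℓ1, hfst1⟩ : ∃ ℓ1 < k, e.2 = J ℓ1 := by
    have heC := hsub he
    rw [mem_cyc] at heC
    obtain ⟨ℓ, hℓ, h | h⟩ := heC
    · exact ⟨ℓ, hℓ, by rw [h]⟩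
    · exact ⟨ℓ, hℓ, by rw [h]⟩
  have key : (cyc k' I' J').filter (fun x => x.2 = e.2) =
      (cyc k I J).filter (fun x => x.2 = e.2) := by
    apply Finset.eq_of_subset_of_card_le
    · exact Finset.filter_subset_filter _ hsub
    · rw [hfst1] at hfst ⊢
      rw [filterR_cyc_card hk hI hJ hℓ1, hfst, filterR_cyc_card hk' hI' hJ' hℓ'']
  have : e' ∈ (cyc k I J).filter (fun x => x.2 = e.2) := Finset.mem_filter.2 ⟨he', h1⟩
  rw [← key] at this
  exact (Finset.mem_filter.1 this).1

lemma subcycle_eq : cyc k' I' J' = cyc k I J := by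
  refine Finset.Subset.antisymm hsub ?_
  -- starting point
  obtain ⟨ℓs, hℓs, hstart⟩ : ∃ ℓs < k, ∃ e ∈ cyc k' I' J', e.1 = I ℓs := by
    have he0 : (I' 0, J' 0) ∈ cyc k' I' J' := cyc_nonempty hk' I' J'
    have he0C := hsub he0
    rw [mem_cyc] at he0C
    obtain ⟨ℓ, hℓ, h | h⟩ := he0C
    · exact ⟨ℓ, hℓ, _, he0, by rw [h]⟩
    · exact ⟨(ℓ + 1) % k, succ_mod_lt (by omega), _, he0, by rw [h]⟩
  -- the step lemma
  have stepL : ∀ ℓ < k, (∃ e ∈ cyc k' I' J', e.1 = I ℓ) → (I ℓ, J ℓ) ∈ cyc k' I' J' := by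
    rintro ℓ hℓ ⟨e, he, h1⟩
    exact closedL hk hI hJ hk' hI' hJ' hsub he
      (mem_cyc.2 ⟨ℓ, hℓ, Or.inl rfl⟩) h1.symm
  have stepR : ∀ ℓ < k, (I ℓ, J ℓ) ∈ cyc k' I' J' →
      (I ((ℓ + 1) % k), J ℓ) ∈ cyc k' I' J' := by
    intro ℓ hℓ h
    exact closedR hk hI hJ hk' hI' hJ' hsub h
      (mem_cyc.2 ⟨ℓ, hℓ, Or.inr rfl⟩) rfl
  -- induction along the cycle
  have ind : ∀ d : ℕ, ∃ e ∈ cyc k' I' J', e.1 = I ((ℓs + d) % k) := by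
    intro d
    induction d with
    | zero => simpa [Nat.mod_eq_of_lt hℓs] using hstart
    | succ d ih =>
      have hlt : (ℓs + d) % k < k := Nat.mod_lt _ (by omega)
      have h1 := stepL _ hlt ih
      have h2 := stepR _ hlt h1
      refine ⟨_, h2, ?_⟩
      simp only
      congr 1
      rw [Nat.mod_add_mod, ← Nat.add_assoc]
  have all : ∀ ℓ < k, ∃ e ∈ cyc k' I' J', e.1 = I ℓ := by
    intro ℓ hℓ
    have := ind (ℓ + k - ℓs)
    have harith : (ℓs + (ℓ + k - ℓs)) % k = ℓ := by
      have : ℓs + (ℓ + k - ℓs) = ℓ + k := by omega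
      rw [this, Nat.add_mod_right, Nat.mod_eq_of_lt hℓ]
    rwa [harith] at this
  -- conclude
  intro e he
  have heC := he
  rw [mem_cyc] at heC
  obtain ⟨ℓ, hℓ, h | h⟩ := heC
  · obtain ⟨e', he', h1⟩ := all ℓ hℓ
    exact closedL hk hI hJ hk' hI' hJ' hsub he' he (by rw [h, h1])
  · obtain ⟨e', he', h1⟩ := all ((ℓ + 1) % k) (succ_mod_lt (by omega))
    exact closedL hk hI hJ hk' hI' hJ' hsub he' he (by rw [h, h1])

end Subcycle

lemma isSimpleCycle_iff {m n : ℕ} {C : Finset (Fin m × Fin n)} :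
    IsSimpleCycle C ↔ ∃ k : ℕ, 2 ≤ k ∧ ∃ (I : ℕ → Fin m) (J : ℕ → Fin n),
      Set.InjOn I (Set.Iio k) ∧ Set.InjOn J (Set.Iio k) ∧ C = cyc k I J := Iff.rfl

lemma erase_acyclic {m n : ℕ} {C : Finset (Fin m × Fin n)} (hC : IsSimpleCycle C)
    {e : Fin m × Fin n} (he : e ∈ C) : IsAcyclicEdges (C.erase e) := by
  intro C₂ hC₂sub hC₂
  obtain ⟨k, hk, I, J, hI, hJ, rfl⟩ := isSimpleCycle_iff.1 hC
  obtain ⟨k', hk', I', J', hI', hJ', rfl⟩ := isSimpleCycle_iff.1 hC₂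
  have hsub : cyc k' I' J' ⊆ cyc k I J := hC₂sub.trans (Finset.erase_subset _ _)
  have heq := subcycle_eq hk hI hJ hk' hI' hJ' hsub
  rw [← heq] at he
  exact Finset.notMem_erase e _ (hC₂sub he)

lemma exists_cycle_of_min_degree_two {m n : ℕ} (S : Finset (Fin m × Fin n)) (hS : S.Nonempty)
    (hdR : ∀ e ∈ S, 2 ≤ (S.filter (fun x => x.2 = e.2)).card)
    (hdL : ∀ e ∈ S, 2 ≤ (S.filter (fun x => x.1 = e.1)).card) :
    ∃ C ⊆ S, IsSimpleCycle C := by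
  classical
  obtain ⟨e0, he0⟩ := hS
  have stepI : ∀ e : {x // x ∈ S}, ∃ e' : {x // x ∈ S}, e'.1.2 = e.1.2 ∧ e'.1.1 ≠ e.1.1 := by
    rintro ⟨e, he⟩
    obtain ⟨b, hb, hbe⟩ := Finset.exists_mem_ne
      (lt_of_lt_of_le one_lt_two (hdR e he)) e
    rw [Finset.mem_filter] at hb
    refine ⟨⟨b, hb.1⟩, hb.2, fun h => hbe ?_⟩
    exact Prod.ext h hb.2
  have stepJ : ∀ e : {x // x ∈ S}, ∃ e' : {x // x ∈ S}, e'.1.1 = e.1.1 ∧ e'.1.2 ≠ e.1.2 := by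
    rintro ⟨e, he⟩
    obtain ⟨b, hb, hbe⟩ := Finset.exists_mem_ne
      (lt_of_lt_of_le one_lt_two (hdL e he)) e
    rw [Finset.mem_filter] at hb
    refine ⟨⟨b, hb.1⟩, hb.2, fun h => hbe ?_⟩
    exact Prod.ext hb.2 h
  choose σ hσ2 hσ1 using stepI
  choose τ hτ1 hτ2 using stepJ
  let f : ℕ → {x // x ∈ S} := fun d => Nat.rec ⟨e0, he0⟩ (fun _ e => τ (σ e)) d
  have hfsucc : ∀ d, f (d + 1) = τ (σ (f d)) := fun d => rfl
  let ii : ℕ → Fin m := fun d => (f d).1.1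
  let jj : ℕ → Fin n := fun d => (f d).1.2
  have hfS : ∀ d, (ii d, jj d) ∈ S := fun d => by
    show ((f d).1.1, (f d).1.2) ∈ S
    rw [Prod.mk.eta]; exact (f d).2
  have hmid : ∀ d, (ii (d + 1), jj d) ∈ S := by
    intro d
    have h1 : ii (d + 1) = (σ (f d)).1.1 := by
      show (f (d + 1)).1.1 = _
      rw [hfsucc]; exact hτ1 (σ (f d))
    have h2 : jj d = (σ (f d)).1.2 := (hσ2 (f d)).symm
    rw [h1, h2, Prod.mk.eta]; exact (σ (f d)).2
  have hii : ∀ d, ii (d + 1) ≠ ii d := by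
    intro d
    have h1 : ii (d + 1) = (σ (f d)).1.1 := by
      show (f (d + 1)).1.1 = _
      rw [hfsucc]; exact hτ1 (σ (f d))
    rw [h1]; exact hσ1 (f d)
  have hjj : ∀ d, jj (d + 1) ≠ jj d := by
    intro d
    have h1 : jj (d + 1) = (τ (σ (f d))).1.2 := rfl
    have h2 : (σ (f d)).1.2 = jj d := hσ2 (f d)
    rw [h1, ← h2]
    exact hτ2 (σ (f d))
  -- the first repetition of a vertex
  set P : ℕ → Prop := fun T => ∃ t, t < T ∧
    ((t % 2 = 0 ∧ T % 2 = 0 ∧ ii (t / 2) = ii (T / 2)) ∨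
     (t % 2 = 1 ∧ T % 2 = 1 ∧ jj (t / 2) = jj (T / 2))) with hP
  have hPdec : DecidablePred P := fun _ => Classical.dec _
  have hPex : ∃ T, P T := by
    obtain ⟨a, b, hab, h⟩ := Fintype.exists_ne_map_eq_of_card_lt
      (fun x : Fin (m + 1) => ii (x : ℕ)) (by simp)
    have hab' : (a : ℕ) ≠ (b : ℕ) := fun h' => hab (Fin.ext h')
    rcases hab'.lt_or_gt with h1 | h1
    · refine ⟨2 * (b : ℕ), 2 * (a : ℕ), by omega, Or.inl ⟨by omega, by omega, ?_⟩⟩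
      rw [show 2 * (a : ℕ) / 2 = (a : ℕ) by omega, show 2 * (b : ℕ) / 2 = (b : ℕ) by omega]
      exact h
    · refine ⟨2 * (a : ℕ), 2 * (b : ℕ), by omega, Or.inl ⟨by omega, by omega, ?_⟩⟩
      rw [show 2 * (a : ℕ) / 2 = (a : ℕ) by omega, show 2 * (b : ℕ) / 2 = (b : ℕ) by omega]
      exact h.symm
  obtain ⟨t, htT, hcase⟩ := Nat.find_spec hPex
  set T := Nat.find hPex with hT
  have dsL : ∀ c d : ℕ, c < d → 2 * d < T → ii c ≠ ii d := by
    intro c d hcd hdT h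
    exact Nat.find_min hPex hdT ⟨2 * c, by omega, Or.inl ⟨by omega, by omega, by
      rw [show 2 * c / 2 = c by omega, show 2 * d / 2 = d by omega]; exact h⟩⟩
  have dsR : ∀ c d : ℕ, c < d → 2 * d + 1 < T → jj c ≠ jj d := by
    intro c d hcd hdT h
    exact Nat.find_min hPex hdT ⟨2 * c + 1, by omega, Or.inr ⟨by omega, by omega, by
      rw [show (2 * c + 1) / 2 = c by omega, show (2 * d + 1) / 2 = d by omega]; exact h⟩⟩
  rcases hcase with ⟨ht0, hT0, heq⟩ | ⟨ht1, hT1, heq⟩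
  · -- even case : repeated left vertex
    set a := t / 2 with ha
    set b := T / 2 with hb
    have hta : t = 2 * a := by omega
    have hTb : T = 2 * b := by omega
    have hab : a < b := by omega
    set k := b - a with hk
    have hk2 : 2 ≤ k := by
      rcases Nat.lt_or_ge k 2 with h | h
      · exfalso
        have hb1 : b = a + 1 := by omega
        exact hii a (by rw [show a + 1 = b from by omega]; exact heq.symm)
      · exact h
    refine ⟨cyc k (fun ℓ => ii (a + ℓ)) (fun ℓ => jj (a + ℓ)), ?_, ?_⟩
    · intro e he
      rw [mem_cyc] at he
      obtain ⟨ℓ, hℓ, rfl | rfl⟩ := he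
      · exact hfS (a + ℓ)
      · rw [succ_mod_eq hℓ]
        by_cases h : ℓ + 1 = k
        · rw [if_pos h]
          show (ii (a + 0), jj (a + ℓ)) ∈ S
          have h2 : ii (a + 0) = ii (a + ℓ + 1) := by
            rw [show a + 0 = a from rfl, show a + ℓ + 1 = b from by omega]
            exact heq
          rw [h2]; exact hmid (a + ℓ)
        · rw [if_neg h]
          show (ii (a + (ℓ + 1)), jj (a + ℓ)) ∈ S
          rw [show a + (ℓ + 1) = (a + ℓ) + 1 from rfl]
          exact hmid (a + ℓ)
    · refine isSimpleCycle_iff.2 ⟨k, hk2, _, _, ?_, ?_, rfl⟩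
      · intro x hx y hy hxy
        simp only [Set.mem_Iio] at hx hy
        rcases Nat.lt_trichotomy x y with h | h | h
        · exact absurd hxy (dsL (a + x) (a + y) (by omega) (by omega))
        · exact h
        · exact absurd hxy.symm (dsL (a + y) (a + x) (by omega) (by omega))
      · intro x hx y hy hxy
        simp only [Set.mem_Iio] at hx hy
        rcases Nat.lt_trichotomy x y with h | h | h
        · exact absurd hxy (dsR (a + x) (a + y) (by omega) (by omega))
        · exact h
        · exact absurd hxy.symm (dsR (a + y) (a + x) (by omega) (by omega))
  · -- odd case : repeated right vertex
    set a := t / 2 with ha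
    set b := T / 2 with hb
    have hta : t = 2 * a + 1 := by omega
    have hTb : T = 2 * b + 1 := by omega
    have hab : a < b := by omega
    set k := b - a with hk
    have hk2 : 2 ≤ k := by
      rcases Nat.lt_or_ge k 2 with h | h
      · exfalso
        have hb1 : b = a + 1 := by omega
        exact hjj a (by rw [show a + 1 = b from by omega]; exact heq.symm)
      · exact h
    refine ⟨cyc k (fun ℓ => ii (a + 1 + ℓ)) (fun ℓ => if ℓ = k - 1 then jj a else jj (a + 1 + ℓ)),
      ?_, ?_⟩
    · intro e he
      rw [mem_cyc] at he
      obtain ⟨ℓ, hℓ, rfl | rfl⟩ := he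
      · by_cases h : ℓ = k - 1
        · simp only [if_pos h]
          have h2 : jj a = jj (a + 1 + ℓ) := by
            rw [show a + 1 + ℓ = b from by omega]
            exact heq
          rw [h2]
          exact hfS (a + 1 + ℓ)
        · simp only [if_neg h]
          exact hfS (a + 1 + ℓ)
      · rw [succ_mod_eq hℓ]
        by_cases h : ℓ + 1 = k
        · rw [if_pos h]
          have hℓeq : ℓ = k - 1 := by omega
          simp only [if_pos hℓeq]
          show (ii (a + 1 + 0), jj a) ∈ S
          rw [show a + 1 + 0 = a + 1 from rfl]
          exact hmid a
        · rw [if_neg h]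
          have hℓne : ℓ ≠ k - 1 := by omega
          simp only [if_neg hℓne]
          show (ii (a + 1 + (ℓ + 1)), jj (a + 1 + ℓ)) ∈ S
          rw [show a + 1 + (ℓ + 1) = (a + 1 + ℓ) + 1 from rfl]
          exact hmid (a + 1 + ℓ)
    · refine isSimpleCycle_iff.2 ⟨k, hk2, _, _, ?_, ?_, rfl⟩
      · intro x hx y hy hxy
        simp only [Set.mem_Iio] at hx hy
        rcases Nat.lt_trichotomy x y with h | h | h
        · exact absurd hxy (dsL (a + 1 + x) (a + 1 + y) (by omega) (by omega))
        · exact h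
        · exact absurd hxy.symm (dsL (a + 1 + y) (a + 1 + x) (by omega) (by omega))
      · intro x hx y hy hxy
        simp only [Set.mem_Iio] at hx hy
        rcases Nat.lt_trichotomy x y with h | h | h
        · -- x < y
          by_cases hy1 : y = k - 1
          · simp only [if_neg (by omega : x ≠ k - 1), if_pos hy1] at hxy
            exact absurd hxy.symm (dsR a (a + 1 + x) (by omega) (by omega))
          · simp only [if_neg (by omega : x ≠ k - 1), if_neg hy1] at hxy
            exact absurd hxy (dsR (a + 1 + x) (a + 1 + y) (by omega) (by omega))
        · exact h
        · by_cases hx1 : x = k - 1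
          · simp only [if_pos hx1, if_neg (by omega : y ≠ k - 1)] at hxy
            exact absurd hxy (dsR a (a + 1 + y) (by omega) (by omega))
          · simp only [if_neg hx1, if_neg (by omega : y ≠ k - 1)] at hxy
            exact absurd hxy.symm (dsR (a + 1 + y) (a + 1 + x) (by omega) (by omega))

lemma exists_cycle_of_degrees {m n : ℕ} :
    ∀ (N : ℕ) (S : Finset (Fin m × Fin n)) (exc : Option (Fin m ⊕ Fin n)),
      S.card ≤ N → S.Nonempty →
      (∀ i : Fin m, some (Sum.inl i) ≠ exc → (S.filter (fun e => e.1 = i)).card ≠ 1) →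
      (∀ j : Fin n, some (Sum.inr j) ≠ exc → (S.filter (fun e => e.2 = j)).card ≠ 1) →
      ∃ C ⊆ S, IsSimpleCycle C := by
  intro N
  induction N with
  | zero =>
    intro S exc hcard hne _ _
    rw [Nat.le_zero, Finset.card_eq_zero] at hcard
    subst hcard
    exact absurd hne (by simp)
  | succ N ih =>
    intro S exc hcard hne hL hR
    classical
    by_cases hdeg : (∃ i : Fin m, (S.filter (fun e => e.1 = i)).card = 1) ∨
        (∃ j : Fin n, (S.filter (fun e => e.2 = j)).card = 1)
    · rcases hdeg with ⟨i, hi⟩ | ⟨j, hj⟩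
      · -- pendant left vertex i
        have hexc : exc = some (Sum.inl i) := by
          by_contra h
          exact hL i (fun hh => h hh.symm) hi
        obtain ⟨e, hefe⟩ := Finset.card_eq_one.1 hi
        have heS : e ∈ S ∧ e.1 = i := by
          have h1 : e ∈ S.filter (fun x => x.1 = i) := by
            rw [hefe]; exact Finset.mem_singleton_self e
          exact Finset.mem_filter.1 h1
        have hj2 : 2 ≤ (S.filter (fun x => x.2 = e.2)).card := by
          have h1 : e ∈ S.filter (fun x => x.2 = e.2) := Finset.mem_filter.2 ⟨heS.1, rfl⟩
          have h2 : (S.filter (fun x => x.2 = e.2)).card ≠ 1 :=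
            hR e.2 (by rw [hexc]; simp)
          have h3 : 1 ≤ (S.filter (fun x => x.2 = e.2)).card := Finset.card_pos.2 ⟨e, h1⟩
          omega
        obtain ⟨b, hb, hbe⟩ := Finset.exists_mem_ne
          (show 1 < (S.filter (fun x => x.2 = e.2)).card by omega) e
        set S' := S.erase e with hS'
        have hbS' : b ∈ S' := Finset.mem_erase.2 ⟨hbe, (Finset.mem_filter.1 hb).1⟩
        have hcard' : S'.card ≤ N := by
          have h9 : S'.card = S.card - 1 := Finset.card_erase_of_mem heS.1
          omega
        set exc' : Option (Fin m ⊕ Fin n) :=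
          if (S'.filter (fun x => x.2 = e.2)).card = 1 then some (Sum.inr e.2) else none
          with hexc'
        have hfe : ∀ p : Fin m × Fin n → Prop, ∀ inst : DecidablePred p,
            S'.filter p = (S.filter p).erase e := fun p _ => Finset.filter_erase p e S
        have hLS' : ∀ i' : Fin m, some (Sum.inl i') ≠ exc' →
            (S'.filter (fun x => x.1 = i')).card ≠ 1 := by
          intro i' _
          rw [hfe _ _]
          by_cases h : i' = i
          · subst h
            rw [hefe, Finset.erase_singleton, Finset.card_empty]
            omega
          · rw [Finset.erase_eq_of_notMem (by
              rw [Finset.mem_filter]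
              rintro ⟨-, h2⟩
              rw [heS.2] at h2
              exact h h2.symm)]
            exact hL i' (by rw [hexc]; simpa using h)
        have hRS' : ∀ j' : Fin n, some (Sum.inr j') ≠ exc' →
            (S'.filter (fun x => x.2 = j')).card ≠ 1 := by
          intro j' hj'
          by_cases h : j' = e.2
          · subst h
            by_cases hc : (S'.filter (fun x => x.2 = e.2)).card = 1
            · exact absurd (by rw [hexc', if_pos hc] : exc' = some (Sum.inr e.2))
                (fun hh => hj' hh.symm)
            · exact hc
          · rw [hfe _ _]
            rw [Finset.erase_eq_of_notMem (by
              rw [Finset.mem_filter]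
              rintro ⟨-, h2⟩
              exact h h2.symm)]
            exact hR j' (by rw [hexc]; simp)
        obtain ⟨C, hCsub, hCcyc⟩ := ih S' exc' hcard' ⟨b, hbS'⟩ hLS' hRS'
        exact ⟨C, hCsub.trans (Finset.erase_subset _ _), hCcyc⟩
      · -- pendant right vertex j
        have hexc : exc = some (Sum.inr j) := by
          by_contra h
          exact hR j (fun hh => h hh.symm) hj
        obtain ⟨e, hefe⟩ := Finset.card_eq_one.1 hj
        have heS : e ∈ S ∧ e.2 = j := by
          have h1 : e ∈ S.filter (fun x => x.2 = j) := by
            rw [hefe]; exact Finset.mem_singleton_self e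
          exact Finset.mem_filter.1 h1
        have hi2 : 2 ≤ (S.filter (fun x => x.1 = e.1)).card := by
          have h1 : e ∈ S.filter (fun x => x.1 = e.1) := Finset.mem_filter.2 ⟨heS.1, rfl⟩
          have h2 : (S.filter (fun x => x.1 = e.1)).card ≠ 1 :=
            hL e.1 (by rw [hexc]; simp)
          have h3 : 1 ≤ (S.filter (fun x => x.1 = e.1)).card := Finset.card_pos.2 ⟨e, h1⟩
          omega
        obtain ⟨b, hb, hbe⟩ := Finset.exists_mem_ne
          (show 1 < (S.filter (fun x => x.1 = e.1)).card by omega) e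
        set S' := S.erase e with hS'
        have hbS' : b ∈ S' := Finset.mem_erase.2 ⟨hbe, (Finset.mem_filter.1 hb).1⟩
        have hcard' : S'.card ≤ N := by
          have h9 : S'.card = S.card - 1 := Finset.card_erase_of_mem heS.1
          omega
        set exc' : Option (Fin m ⊕ Fin n) :=
          if (S'.filter (fun x => x.1 = e.1)).card = 1 then some (Sum.inl e.1) else none
          with hexc'
        have hfe : ∀ p : Fin m × Fin n → Prop, ∀ inst : DecidablePred p,
            S'.filter p = (S.filter p).erase e := fun p _ => Finset.filter_erase p e S
        have hLS' : ∀ i' : Fin m, some (Sum.inl i') ≠ exc' →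
            (S'.filter (fun x => x.1 = i')).card ≠ 1 := by
          intro i' hi'
          by_cases h : i' = e.1
          · subst h
            by_cases hc : (S'.filter (fun x => x.1 = e.1)).card = 1
            · exact absurd (by rw [hexc', if_pos hc] : exc' = some (Sum.inl e.1))
                (fun hh => hi' hh.symm)
            · exact hc
          · rw [hfe _ _]
            rw [Finset.erase_eq_of_notMem (by
              rw [Finset.mem_filter]
              rintro ⟨-, h2⟩
              exact h h2.symm)]
            exact hL i' (by rw [hexc]; simp)
        have hRS' : ∀ j' : Fin n, some (Sum.inr j') ≠ exc' →
            (S'.filter (fun x => x.2 = j')).card ≠ 1 := by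
          intro j' _
          rw [hfe _ _]
          by_cases h : j' = j
          · subst h
            rw [hefe, Finset.erase_singleton, Finset.card_empty]
            omega
          · rw [Finset.erase_eq_of_notMem (by
              rw [Finset.mem_filter]
              rintro ⟨-, h2⟩
              rw [heS.2] at h2
              exact h h2.symm)]
            exact hR j' (by rw [hexc]; simpa using h)
        obtain ⟨C, hCsub, hCcyc⟩ := ih S' exc' hcard' ⟨b, hbS'⟩ hLS' hRS'
        exact ⟨C, hCsub.trans (Finset.erase_subset _ _), hCcyc⟩
    · -- minimum degree 2
      push_neg at hdeg
      apply exists_cycle_of_min_degree_two S hne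
      · intro e he
        have h1 : 1 ≤ (S.filter (fun x => x.2 = e.2)).card :=
          Finset.card_pos.2 ⟨e, Finset.mem_filter.2 ⟨he, rfl⟩⟩
        have h2 := hdeg.2 e.2
        omega
      · intro e he
        have h1 : 1 ≤ (S.filter (fun x => x.1 = e.1)).card :=
          Finset.card_pos.2 ⟨e, Finset.mem_filter.2 ⟨he, rfl⟩⟩
        have h2 := hdeg.1 e.1
        omega
section Rank
variable {R C : Type*} [Fintype R] [Fintype C] {F : Type*} [Field F]

lemma rank_eq_card_of_injective (M : Matrix R C F)
    (h : ∀ v : C → F, M.mulVec v = 0 → v = 0) : M.rank = Fintype.card C := by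
  have hker : LinearMap.ker M.mulVecLin = ⊥ := by
    rw [LinearMap.ker_eq_bot']
    intro v hv
    exact h v (by rwa [Matrix.mulVecLin_apply] at hv)
  have hrn := LinearMap.finrank_range_add_finrank_ker M.mulVecLin
  rw [hker, finrank_bot, add_zero, Module.finrank_pi] at hrn
  exact hrn

lemma mulVec_eq_zero_of_rank_eq_card (M : Matrix R C F) (h : M.rank = Fintype.card C)
    (v : C → F) (hv : M.mulVec v = 0) : v = 0 := by
  have hrn := LinearMap.finrank_range_add_finrank_ker M.mulVecLin
  rw [Module.finrank_pi] at hrn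
  have hM : M.rank = Module.finrank F (LinearMap.range M.mulVecLin) := rfl
  have hker0 : Module.finrank F (LinearMap.ker M.mulVecLin) = 0 := by omega
  have hker : LinearMap.ker M.mulVecLin = ⊥ := Submodule.finrank_eq_zero.1 hker0
  have : v ∈ LinearMap.ker M.mulVecLin := by
    rw [LinearMap.mem_ker, Matrix.mulVecLin_apply, hv]
  rwa [hker, Submodule.mem_bot] at this

end Rank

section GridComp
variable {F : Type*} [Field F] {m n h : ℕ}

/-- extension by zero of a vector indexed by a subset of the columns -/
def ext0 {E : Finset (Fin m × Fin n)} (lam : {e // e ∈ E} → F) : Fin m × Fin n → F :=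
  fun e => if he : e ∈ E then lam ⟨e, he⟩ else 0

lemma submatrix_mulVec (c : Fin m × Fin n → Fin h → F) (E : Finset (Fin m × Fin n))
    (lam : {e // e ∈ E} → F) :
    ((gridH F m n h c).submatrix id (fun e : E => (e : Fin m × Fin n))).mulVec lam
      = (gridH F m n h c).mulVec (ext0 lam) := by
  funext r
  simp only [Matrix.mulVec, dotProduct, Matrix.submatrix_apply, id]
  rw [show (Finset.univ : Finset {e // e ∈ E}) = E.attach from rfl]
  have h1 : ∀ x : {e // e ∈ E}, lam x = ext0 lam ↑x := fun x => by
    rw [ext0, dif_pos x.2]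
  calc ∑ x ∈ E.attach, gridH F m n h c r ↑x * lam x
      = ∑ x ∈ E.attach, gridH F m n h c r ↑x * ext0 lam ↑x := by
        apply Finset.sum_congr rfl
        intro x _
        rw [h1]
    _ = ∑ e ∈ E, gridH F m n h c r e * ext0 lam e :=
        Finset.sum_attach E (fun e => gridH F m n h c r e * ext0 lam e)
    _ = ∑ e, gridH F m n h c r e * ext0 lam e :=
        Finset.sum_subset (Finset.subset_univ E)
          (fun x _ hx => by rw [ext0, dif_neg hx, mul_zero])

lemma gridH_mulVec_inl (c : Fin m × Fin n → Fin h → F) (v : Fin m × Fin n → F) (i : Fin m) :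
    (gridH F m n h c).mulVec v (Sum.inl i) =
      ∑ e ∈ Finset.univ.filter (fun e : Fin m × Fin n => e.1 = i), v e := by
  simp only [Matrix.mulVec, dotProduct, gridH, Matrix.of_apply, Sum.elim_inl]
  rw [Finset.sum_filter]
  congr 1
  funext e
  split <;> simp

lemma gridH_mulVec_inrl (c : Fin m × Fin n → Fin h → F) (v : Fin m × Fin n → F)
    (j : Fin (n - 1)) :
    (gridH F m n h c).mulVec v (Sum.inr (Sum.inl j)) =
      ∑ e ∈ Finset.univ.filter (fun e : Fin m × Fin n => ((e.2 : ℕ) = (j : ℕ))), v e := by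
  simp only [Matrix.mulVec, dotProduct, gridH, Matrix.of_apply, Sum.elim_inr, Sum.elim_inl]
  rw [Finset.sum_filter]
  congr 1
  funext e
  split <;> simp

lemma gridH_mulVec_inrr (c : Fin m × Fin n → Fin h → F) (v : Fin m × Fin n → F) (k : Fin h) :
    (gridH F m n h c).mulVec v (Sum.inr (Sum.inr k)) = ∑ e, c e k * v e := by
  simp only [Matrix.mulVec, dotProduct, gridH, Matrix.of_apply, Sum.elim_inr]

end GridComp
section KeyLemmas
variable {F : Type*} [Field F] {m n : ℕ}

lemma filter_card_cyc_L {k : ℕ} {I : ℕ → Fin m} {J : ℕ → Fin n} (hk : 2 ≤ k)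
    (hI : Set.InjOn I (Set.Iio k)) (hJ : Set.InjOn J (Set.Iio k)) (i : Fin m) :
    ((cyc k I J).filter (fun e => e.1 = i)).card = 0 ∨
      ((cyc k I J).filter (fun e => e.1 = i)).card = 2 := by
  classical
  by_cases hvx : ∃ ℓ < k, I ℓ = i
  · obtain ⟨ℓ, hℓ, rfl⟩ := hvx
    exact Or.inr (filterL_cyc_card hk hI hJ hℓ)
  · left
    rw [Finset.card_eq_zero, Finset.filter_eq_empty_iff]
    intro e he
    rw [mem_cyc] at he
    obtain ⟨ℓ, hℓ, rfl | rfl⟩ := he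
    · exact fun h => hvx ⟨ℓ, hℓ, h⟩
    · exact fun h => hvx ⟨(ℓ + 1) % k, succ_mod_lt (by omega), h⟩

lemma filter_card_cyc_R {k : ℕ} {I : ℕ → Fin m} {J : ℕ → Fin n} (hk : 2 ≤ k)
    (hI : Set.InjOn I (Set.Iio k)) (hJ : Set.InjOn J (Set.Iio k)) (w : Fin n) :
    ((cyc k I J).filter (fun e => e.2 = w)).card = 0 ∨
      ((cyc k I J).filter (fun e => e.2 = w)).card = 2 := by
  classical
  by_cases hvx : ∃ ℓ < k, J ℓ = w
  · obtain ⟨ℓ, hℓ, rfl⟩ := hvx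
    exact Or.inr (filterR_cyc_card hk hI hJ hℓ)
  · left
    rw [Finset.card_eq_zero, Finset.filter_eq_empty_iff]
    intro e he
    rw [mem_cyc] at he
    obtain ⟨ℓ, hℓ, rfl | rfl⟩ := he
    · exact fun h => hvx ⟨ℓ, hℓ, h⟩
    · exact fun h => hvx ⟨ℓ, hℓ, h⟩

lemma sum_ind {α : Type*} [Fintype α] [DecidableEq α] (C : Finset α) (p : α → Prop)
    [DecidablePred p] (x : F) :
    (∑ e ∈ Finset.univ.filter p, if e ∈ C then x else 0) = (C.filter p).card • x := by
  rw [Finset.sum_ite_mem, Finset.sum_const]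
  congr 2
  ext e
  simp only [Finset.mem_inter, Finset.mem_filter, Finset.mem_univ, true_and]
  exact And.comm

/-- predicate conversion for column rows -/
lemma pred_conv (j : Fin (n - 1)) :
    (Finset.univ.filter (fun e : Fin m × Fin n => ((e.2 : ℕ) = (j : ℕ)))) =
      Finset.univ.filter (fun e : Fin m × Fin n => e.2 = ⟨(j : ℕ), lt_of_lt_of_le j.2 (Nat.sub_le n 1)⟩) := by
  ext e
  simp only [Finset.mem_filter, Finset.mem_univ, true_and, Fin.ext_iff]

lemma support_deg {v : Fin m × Fin n → F}
    [inst : ∀ e : Fin m × Fin n, Decidable (v e ≠ 0)]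
    (hrow : ∀ i : Fin m,
      ∑ e ∈ Finset.univ.filter (fun e : Fin m × Fin n => e.1 = i), v e = 0)
    (hcol : ∀ j : Fin (n - 1),
      ∑ e ∈ Finset.univ.filter (fun e : Fin m × Fin n => ((e.2 : ℕ) = (j : ℕ))), v e = 0) :
    (∀ i : Fin m,
      (((Finset.univ.filter (fun e => v e ≠ 0))).filter (fun e => e.1 = i)).card ≠ 1) ∧
    (∀ w : Fin n, (w : ℕ) ≠ n - 1 →
      (((Finset.univ.filter (fun e => v e ≠ 0))).filter (fun e => e.2 = w)).card ≠ 1) := by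
  classical
  have key : ∀ p : Fin m × Fin n → Prop, ∀ _ : DecidablePred p,
      (∑ e ∈ Finset.univ.filter p, v e = 0) →
      (((Finset.univ.filter (fun e => v e ≠ 0))).filter p).card ≠ 1 := by
    intro p _ hsum hcard
    obtain ⟨e0, he0⟩ := Finset.card_eq_one.1 hcard
    have h1 : ((Finset.univ.filter p).filter (fun e => v e ≠ 0)) = {e0} := by
      rw [Finset.filter_comm]
      convert he0 using 2
    have h2 : ∑ e ∈ (Finset.univ.filter p).filter (fun e => v e ≠ 0), v e
        = ∑ e ∈ Finset.univ.filter p, v e := Finset.sum_filter_ne_zero _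
    rw [h1, Finset.sum_singleton, hsum] at h2
    have he0m : e0 ∈ ({e0} : Finset (Fin m × Fin n)) := Finset.mem_singleton_self e0
    rw [← h1, Finset.mem_filter] at he0m
    exact he0m.2 h2
  constructor
  · intro i
    exact key _ _ (hrow i)
  · intro w hw
    have hwlt : (w : ℕ) < n - 1 := by
      have := w.2
      omega
    have := key (fun e => ((e.2 : ℕ) = (w : ℕ))) inferInstance (by
      have := hcol ⟨(w : ℕ), hwlt⟩
      simpa using this)
    have hpe : (Finset.univ.filter (fun e : Fin m × Fin n => v e ≠ 0)).filter
          (fun e => e.2 = w)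
        = (Finset.univ.filter (fun e : Fin m × Fin n => v e ≠ 0)).filter
          (fun e => ((e.2 : ℕ) = (w : ℕ))) := by
      ext e
      simp only [Finset.mem_filter, Fin.ext_iff]
    rw [hpe]
    exact this

end KeyLemmas
section Dir1
variable {F : Type*} [Field F] [CharP F 2] {m n : ℕ}

lemma isMR_cycle_sum_ne_zero (c : Fin m × Fin n → Fin 1 → F) (hMR : IsMR F m n 1 c)
    {k : ℕ} {I : ℕ → Fin m} {J : ℕ → Fin n} (hk : 2 ≤ k)
    (hI : Set.InjOn I (Set.Iio k)) (hJ : Set.InjOn J (Set.Iio k)) :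
    ∑ ℓ ∈ Finset.range k, (c (I ℓ, J ℓ) 0 - c (I ((ℓ + 1) % k), J ℓ) 0) ≠ 0 := by
  intro hsum
  classical
  set C := cyc k I J with hC
  have hCcyc : IsSimpleCycle C := isSimpleCycle_iff.2 ⟨k, hk, I, J, hI, hJ, rfl⟩
  have he0 : (I 0, J 0) ∈ C := cyc_nonempty hk I J
  have hrank := hMR C ⟨C.erase (I 0, J 0), {(I 0, J 0)}, erase_acyclic hCcyc he0, by simp,
    by rw [Finset.union_comm, ← Finset.insert_eq, Finset.insert_erase he0]⟩
  rw [← Fintype.card_coe] at hrank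
  have hker := mulVec_eq_zero_of_rank_eq_card _ hrank (fun _ => (1 : F)) ?_
  · have h1 := congrFun hker ⟨(I 0, J 0), he0⟩
    simp only [Pi.zero_apply] at h1
    exact one_ne_zero h1
  · rw [submatrix_mulVec]
    have hv : ext0 (fun _ : {e // e ∈ C} => (1 : F)) =
        fun e => if e ∈ C then (1 : F) else 0 := by
      funext e
      rw [ext0, dite_eq_ite]
    rw [hv]
    funext r
    simp only [Pi.zero_apply]
    rcases r with i | j | kk
    · rw [gridH_mulVec_inl, sum_ind]
      rcases filter_card_cyc_L hk hI hJ i with h0 | h2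
      · rw [← hC] at h0
        rw [h0, zero_smul]
      · rw [← hC] at h2
        rw [h2, two_smul, CharTwo.add_self_eq_zero]
    · rw [gridH_mulVec_inrl, pred_conv, sum_ind]
      rcases filter_card_cyc_R hk hI hJ
          (⟨(j : ℕ), lt_of_lt_of_le j.2 (Nat.sub_le n 1)⟩ : Fin n) with h0 | h2
      · rw [← hC] at h0
        rw [h0, zero_smul]
      · rw [← hC] at h2
        rw [h2, two_smul, CharTwo.add_self_eq_zero]
    · rw [gridH_mulVec_inrr]
      have hkk : kk = 0 := Subsingleton.elim kk 0
      subst hkk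
      have h1 : ∀ e : Fin m × Fin n,
          c e 0 * (if e ∈ C then (1 : F) else 0) = if e ∈ C then c e 0 else 0 := by
        intro e
        split <;> simp
      calc ∑ e : Fin m × Fin n, c e 0 * (if e ∈ C then (1 : F) else 0)
          = ∑ e : Fin m × Fin n, if e ∈ C then c e 0 else 0 := by
            exact Finset.sum_congr rfl (fun e _ => h1 e)
        _ = ∑ e ∈ Finset.univ ∩ C, c e 0 := Finset.sum_ite_mem _ _ _
        _ = ∑ e ∈ C, c e 0 := by rw [Finset.univ_inter]
        _ = (∑ ℓ ∈ Finset.range k, c (I ℓ, J ℓ) 0) +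
            (∑ ℓ ∈ Finset.range k, c (I ((ℓ + 1) % k), J ℓ) 0) := by
            rw [hC]; exact sum_cyc hk hI hJ _
        _ = 0 := by
            have h2 : ∑ ℓ ∈ Finset.range k,
                (c (I ℓ, J ℓ) 0 - c (I ((ℓ + 1) % k), J ℓ) 0) =
                (∑ ℓ ∈ Finset.range k, c (I ℓ, J ℓ) 0) +
                (∑ ℓ ∈ Finset.range k, c (I ((ℓ + 1) % k), J ℓ) 0) := by
              rw [Finset.sum_sub_distrib, CharTwo.sub_eq_add]
            rw [← h2, hsum]

end Dir1
section Dir2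
variable {F : Type*} [Field F] [CharP F 2] {m n : ℕ}

lemma isMR_of_cycle_sums (hn : 2 ≤ n) (cs : Fin m × Fin n → F)
    (hc : ∀ (k : ℕ) (I : ℕ → Fin m) (J : ℕ → Fin n), 2 ≤ k →
      Set.InjOn I (Set.Iio k) → Set.InjOn J (Set.Iio k) →
      ∑ ℓ ∈ Finset.range k, (cs (I ℓ, J ℓ) - cs (I ((ℓ + 1) % k), J ℓ)) ≠ 0) :
    IsMR F m n 1 (fun e _ => cs e) := by
  classical
  rintro E ⟨E', F', hacyc, hF', rfl⟩
  rw [← Fintype.card_coe]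
  apply rank_eq_card_of_injective
  intro lam hlam
  by_contra hlam0
  set v := ext0 lam with hvdef
  have hv : (gridH F m n 1 (fun e _ => cs e)).mulVec v = 0 := by
    rw [← submatrix_mulVec]
    exact hlam
  have hrow : ∀ i : Fin m,
      ∑ e ∈ Finset.univ.filter (fun e : Fin m × Fin n => e.1 = i), v e = 0 := by
    intro i
    rw [← gridH_mulVec_inl (fun e _ => cs e) v i, hv, Pi.zero_apply]
  have hcol : ∀ j : Fin (n - 1),
      ∑ e ∈ Finset.univ.filter (fun e : Fin m × Fin n => ((e.2 : ℕ) = (j : ℕ))), v e = 0 := by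
    intro j
    rw [← gridH_mulVec_inrl (fun e _ => cs e) v j, hv, Pi.zero_apply]
  have hlast : ∑ e : Fin m × Fin n, cs e * v e = 0 := by
    rw [← gridH_mulVec_inrr (fun (e : Fin m × Fin n) (_ : Fin 1) => cs e) v (0 : Fin 1), hv, Pi.zero_apply]
  -- the support of v
  set S := Finset.univ.filter (fun e : Fin m × Fin n => v e ≠ 0) with hS
  have hSsub : S ⊆ E' ∪ F' := by
    intro e he
    rw [hS, Finset.mem_filter] at he
    by_contra h
    exact he.2 (by rw [hvdef, ext0, dif_neg h])
  have hSne : S.Nonempty := by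
    obtain ⟨x, hx⟩ := Function.ne_iff.1 hlam0
    refine ⟨(x : Fin m × Fin n), Finset.mem_filter.2 ⟨Finset.mem_univ _, ?_⟩⟩
    rw [hvdef, ext0, dif_pos x.2]
    exact hx
  -- find a cycle inside the support
  have hdeg := support_deg hrow hcol
  have hlast_val_lt : n - 1 < n := by omega
  obtain ⟨C, hCS, hCcyc⟩ := exists_cycle_of_degrees S.card S
    (some (Sum.inr (⟨n - 1, hlast_val_lt⟩ : Fin n))) le_rfl hSne
    (fun i _ => hdeg.1 i)
    (fun w hw => hdeg.2 w (fun hval => hw (by rw [show w = ⟨n - 1, hlast_val_lt⟩ from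
      Fin.ext hval])))
  -- find the failed edge on the cycle
  have hnsub : ¬ C ⊆ E' := fun hsub => hacyc C hsub hCcyc
  obtain ⟨f, hfC, hfE'⟩ := Finset.not_subset.1 hnsub
  have hfS : f ∈ S := hCS hfC
  have hfF' : f ∈ F' := by
    rcases Finset.mem_union.1 (hSsub hfS) with h | h
    · exact absurd h hfE'
    · exact h
  have heraseE' : ∀ x ∈ E' ∪ F', x ≠ f → x ∈ E' := by
    intro x hx hxf
    rcases Finset.mem_union.1 hx with h | h
    · exact h
    · exact absurd (Finset.card_le_one.1 hF' x h f hfF') hxf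
  obtain ⟨k, hk, I, J, hI, hJ, hCeq⟩ := isSimpleCycle_iff.1 hCcyc
  -- the corrected vector μ
  set μ : Fin m × Fin n → F := fun e => v e - v f * (if e ∈ C then 1 else 0) with hμ
  have hμrow : ∀ i : Fin m,
      ∑ e ∈ Finset.univ.filter (fun e : Fin m × Fin n => e.1 = i), μ e = 0 := by
    intro i
    rw [Finset.sum_sub_distrib, hrow i, ← Finset.mul_sum, sum_ind]
    rcases filter_card_cyc_L hk hI hJ i with h0 | h2
    · rw [← hCeq] at h0
      rw [h0, zero_smul, mul_zero, sub_zero]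
    · rw [← hCeq] at h2
      rw [h2, two_smul, CharTwo.add_self_eq_zero, mul_zero, sub_zero]
  have hμcol : ∀ j : Fin (n - 1),
      ∑ e ∈ Finset.univ.filter (fun e : Fin m × Fin n => ((e.2 : ℕ) = (j : ℕ))), μ e = 0 := by
    intro j
    rw [Finset.sum_sub_distrib, hcol j, ← Finset.mul_sum, pred_conv, sum_ind]
    rcases filter_card_cyc_R hk hI hJ
        (⟨(j : ℕ), lt_of_lt_of_le j.2 (Nat.sub_le n 1)⟩ : Fin n) with h0 | h2
    · rw [← hCeq] at h0
      rw [h0, zero_smul, mul_zero, sub_zero]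
    · rw [← hCeq] at h2
      rw [h2, two_smul, CharTwo.add_self_eq_zero, mul_zero, sub_zero]
  -- the support of μ is contained in E'
  have hμsupp : ∀ e : Fin m × Fin n, μ e ≠ 0 → e ∈ E' := by
    intro e he
    have heE : e ∈ E' ∪ F' := by
      by_contra h
      apply he
      have h1 : v e = 0 := by rw [hvdef, ext0, dif_neg h]
      have h2 : e ∉ C := fun hc' => h (hSsub (hCS hc'))
      rw [hμ]
      simp only [h1, if_neg h2, mul_zero, sub_zero]
    apply heraseE' e heE
    intro hef
    apply he
    subst hef
    show v e - v e * (if e ∈ C then 1 else 0) = 0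
    rw [if_pos hfC, mul_one, sub_self]
  -- μ must vanish identically
  have hμ0 : ∀ e, μ e = 0 := by
    by_contra h
    push_neg at h
    obtain ⟨e1, he1⟩ := h
    set S2 := Finset.univ.filter (fun e : Fin m × Fin n => μ e ≠ 0) with hS2
    have hS2ne : S2.Nonempty := ⟨e1, Finset.mem_filter.2 ⟨Finset.mem_univ _, he1⟩⟩
    have hdeg2 := support_deg hμrow hμcol
    obtain ⟨C2, hC2S, hC2cyc⟩ := exists_cycle_of_degrees S2.card S2
      (some (Sum.inr (⟨n - 1, hlast_val_lt⟩ : Fin n))) le_rfl hS2ne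
      (fun i _ => hdeg2.1 i)
      (fun w hw => hdeg2.2 w (fun hval => hw (by rw [show w = ⟨n - 1, hlast_val_lt⟩ from
        Fin.ext hval])))
    refine hacyc C2 ?_ hC2cyc
    intro x hx
    exact hμsupp x (Finset.mem_filter.1 (hC2S hx)).2
  -- therefore v = v f · 1_C ; plug into the last parity row
  have hveq : ∀ e, v e = v f * (if e ∈ C then 1 else 0) := by
    intro e
    have h8 : v e - v f * (if e ∈ C then 1 else 0) = 0 := hμ0 e
    exact sub_eq_zero.1 h8
  have hsum0 : v f * ∑ e ∈ C, cs e = 0 := by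
    have h7 : ∀ e : Fin m × Fin n, cs e * v e = if e ∈ C then v f * cs e else 0 := by
      intro e
      rw [hveq e]
      split <;> ring
    calc v f * ∑ e ∈ C, cs e
        = ∑ e ∈ C, v f * cs e := Finset.mul_sum _ _ _
      _ = ∑ e ∈ Finset.univ ∩ C, v f * cs e := by rw [Finset.univ_inter]
      _ = ∑ e : Fin m × Fin n, if e ∈ C then v f * cs e else 0 :=
          (Finset.sum_ite_mem _ _ _).symm
      _ = ∑ e : Fin m × Fin n, cs e * v e :=
          Finset.sum_congr rfl (fun e _ => (h7 e).symm)
      _ = 0 := hlast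
  have hcycne : (∑ e ∈ C, cs e) ≠ 0 := by
    have h2 : ∑ ℓ ∈ Finset.range k, (cs (I ℓ, J ℓ) - cs (I ((ℓ + 1) % k), J ℓ)) =
        (∑ ℓ ∈ Finset.range k, cs (I ℓ, J ℓ)) +
        (∑ ℓ ∈ Finset.range k, cs (I ((ℓ + 1) % k), J ℓ)) := by
      rw [Finset.sum_sub_distrib, CharTwo.sub_eq_add]
    have h3 : ∑ e ∈ C, cs e =
        (∑ ℓ ∈ Finset.range k, cs (I ℓ, J ℓ)) +
        (∑ ℓ ∈ Finset.range k, cs (I ((ℓ + 1) % k), J ℓ)) := by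
      rw [hCeq]
      exact sum_cyc hk hI hJ _
    rw [h3, ← h2]
    exact hc k I J hk hI hJ
  have hvf : v f = 0 := by
    rcases mul_eq_zero.1 hsum0 with h | h
    · exact h
    · exact absurd h hcycne
  rw [hS, Finset.mem_filter] at hfS
  exact hfS.2 hvf

end Dir2
lemma mod2k {k y : ℕ} (hk : 0 < k) (hy : y < 2 * k) :
    y % k = if y < k then y else y - k := by
  by_cases h : y < k
  · rw [if_pos h, Nat.mod_eq_of_lt h]
  · rw [if_neg h, Nat.mod_eq_sub_mod (by omega), Nat.mod_eq_of_lt (by omega)]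

section Gamma
variable {W : Type*} [AddCommGroup W] {m N : ℕ}

lemma gamma_t_const (φ : Fin N → W) (hφ : Function.Injective φ)
    {k : ℕ} (hk : 2 ≤ k) {I : ℕ → Fin m} (hI : Set.InjOn I (Set.Iio k))
    (t : ℕ → Fin N)
    (hyp : ∀ p : Fin (m - 1), ∑ ℓ ∈ Finset.range k,
        ((if Fin.castLE (Nat.sub_le m 1) p = I ℓ then φ (t ℓ) else 0)
          - (if Fin.castLE (Nat.sub_le m 1) p = I ((ℓ + 1) % k) then φ (t ℓ) else 0)) = 0) :
    ∀ a < k, ∀ b < k, t a = t b := by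
  have hk0 : 0 < k := by omega
  -- step: going backwards one position keeps t, away from the special vertex
  have step : ∀ ℓ0 < k, ((I ℓ0 : ℕ) ≠ m - 1) → t ℓ0 = t ((ℓ0 + (k - 1)) % k) := by
    intro ℓ0 hℓ0 hneval
    have hlt : (I ℓ0 : ℕ) < m - 1 := by
      have := (I ℓ0).2
      omega
    set p : Fin (m - 1) := ⟨(I ℓ0 : ℕ), hlt⟩ with hpdef
    have hp : Fin.castLE (Nat.sub_le m 1) p = I ℓ0 := by
      apply Fin.ext
      rfl
    have h9 := hyp p
    rw [Finset.sum_sub_distrib] at h9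
    have h1 : ∑ ℓ ∈ Finset.range k,
        (if Fin.castLE (Nat.sub_le m 1) p = I ℓ then φ (t ℓ) else 0) = φ (t ℓ0) := by
      rw [Finset.sum_eq_single_of_mem ℓ0 (Finset.mem_range.2 hℓ0)]
      · rw [if_pos hp]
      · intro ℓ hℓ hℓne
        rw [if_neg]
        intro hcon
        exact hℓne (hI (Finset.mem_range.1 hℓ) hℓ0 (hcon.symm.trans hp))
    have h2 : ∑ ℓ ∈ Finset.range k,
        (if Fin.castLE (Nat.sub_le m 1) p = I ((ℓ + 1) % k) then φ (t ℓ) else 0)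
          = φ (t ((ℓ0 + (k - 1)) % k)) := by
      rw [Finset.sum_eq_single_of_mem ((ℓ0 + (k - 1)) % k)
        (Finset.mem_range.2 (prev_lt hk0))]
      · rw [if_pos (by rw [succ_prev hk0 hℓ0]; exact hp)]
      · intro ℓ hℓ hℓne
        rw [if_neg]
        intro hcon
        apply hℓne
        have h3 : ℓ0 = (ℓ + 1) % k := hI hℓ0 (succ_mod_lt hk0) (hp.symm.trans hcon)
        have h4 : ((ℓ0 + (k - 1)) % k + 1) % k = ℓ0 := succ_prev hk0 hℓ0
        exact succ_mod_inj (Finset.mem_range.1 hℓ) (prev_lt hk0) (by rw [h4, ← h3])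
    rw [h1, h2] at h9
    exact hφ (sub_eq_zero.1 h9)
  -- the at most one special position
  obtain ⟨ℓs, hℓs, hQ⟩ : ∃ ℓs < k, ∀ ℓ < k, ℓ ≠ ℓs → t ℓ = t ((ℓ + (k - 1)) % k) := by
    by_cases hex : ∃ ℓ < k, (I ℓ : ℕ) = m - 1
    · obtain ⟨ℓs, hℓs, hval⟩ := hex
      refine ⟨ℓs, hℓs, fun ℓ hℓ hne => step ℓ hℓ fun hval' => hne (hI hℓ hℓs (Fin.ext (by
        rw [hval', hval])))⟩
    · push_neg at hex
      exact ⟨0, by omega, fun ℓ hℓ _ => step ℓ hℓ (hex ℓ hℓ)⟩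
  have hchain : ∀ d, d < k → t ((ℓs + d) % k) = t ℓs := by
    intro d
    induction d with
    | zero => intro _; rw [Nat.add_zero, Nat.mod_eq_of_lt hℓs]
    | succ d ihd =>
      intro hd
      have e1 : (ℓs + (d + 1)) % k = if ℓs + (d + 1) < k then ℓs + (d + 1)
          else ℓs + (d + 1) - k := mod2k hk0 (by omega)
      have hne : (ℓs + (d + 1)) % k ≠ ℓs := by
        rw [e1]
        split_ifs <;> omega
      have hidx : ((ℓs + (d + 1)) % k + (k - 1)) % k = (ℓs + d) % k := by
        rw [e1]
        split_ifs with h1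
        · rw [mod2k hk0 (by omega : ℓs + (d + 1) + (k - 1) < 2 * k),
            mod2k hk0 (by omega : ℓs + d < 2 * k)]
          split_ifs <;> omega
        · rw [mod2k hk0 (by omega : ℓs + (d + 1) - k + (k - 1) < 2 * k),
            mod2k hk0 (by omega : ℓs + d < 2 * k)]
          split_ifs <;> omega
      have h5 := hQ ((ℓs + (d + 1)) % k) (Nat.mod_lt _ hk0) hne
      rw [hidx] at h5
      rw [show ℓs + (d + 1) = ℓs + d + 1 from rfl] at h5 ⊢
      rw [h5]
      exact ihd (by omega)
  have hall : ∀ a < k, t a = t ℓs := by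
    intro a ha
    set d := if ℓs ≤ a then a - ℓs else a + k - ℓs with hd
    have hdk : d < k := by
      rw [hd]
      split_ifs <;> omega
    have hda : (ℓs + d) % k = a := by
      rw [mod2k hk0 (by rw [hd]; split_ifs <;> omega)]
      rw [hd]
      split_ifs <;> omega
    have := hchain d hdk
    rwa [hda] at this
  intro a ha b hb
  rw [hall a ha, hall b hb]

end Gamma
lemma card_eq_pow_finrank' {K M : Type*} [Field K] [Fintype K] [AddCommGroup M] [Module K M]
    [Fintype M] : Fintype.card M = Fintype.card K ^ Module.finrank K M := by
  classical
  haveI : Module.Finite K M := Module.Finite.of_finite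
  have b := Module.finBasis K M
  rw [Module.card_fintype b, Fintype.card_fin]

lemma char_two_of_card_pow_two {K : Type*} [Field K] [Fintype K] {s : ℕ}
    (h : Fintype.card K = 2 ^ s) : CharP K 2 := by
  haveI := ringChar.charP K
  obtain ⟨n', hp, hc⟩ := FiniteField.card K (ringChar K)
  have hdvd : ringChar K ∣ 2 ^ s := by
    rw [← h, hc]
    exact dvd_pow_self _ (by exact_mod_cast n'.ne_zero)
  have h2 : ringChar K ∣ 2 := hp.dvd_of_dvd_pow hdvd
  have h3 : ringChar K = 2 := (Nat.prime_dvd_prime_iff_eq hp Nat.prime_two).1 h2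
  exact h3 ▸ ringChar.charP K
/-- the auxiliary labels in the group `(Z/2)^{r(m-1)}` -/
def gammaFun (m N r : ℕ) (φ0 : Fin N → (Fin r → ZMod 2)) :
    Fin m × Fin N → (Fin (m - 1) → Fin r → ZMod 2) :=
  fun itv p => if Fin.castLE (Nat.sub_le m 1) p = itv.1 then φ0 itv.2 else 0

end S14

/-- Theorem A.2.  Let `m ≤ n` be powers of two with `m ≥ 2`, and
suppose an MR `(m, m, a=1, b=1, h=1)` grid code exists over a field `F_{q_m}` with
`q_m` a power of two.  Then an MR `(m, n, a=1, b=1, h=1)` grid code exists over any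
field with `q = (n / m) ^ (m - 1) * q_m` elements. -/
theorem statement14 (m n : ℕ) (hm : 2 ≤ m) (hmn : m ≤ n)
    (hm2 : ∃ s : ℕ, m = 2 ^ s) (hn2 : ∃ t : ℕ, n = 2 ^ t)
    (Fm : Type*) [Field Fm] [Fintype Fm] (hqm : ∃ s : ℕ, Fintype.card Fm = 2 ^ s)
    (hex : ∃ c : Fin m × Fin m → Fin 1 → Fm, IsMR Fm m m 1 c)
    (F : Type*) [Field F] [Fintype F]
    (hcard : Fintype.card F = (n / m) ^ (m - 1) * Fintype.card Fm) :
    ∃ c' : Fin m × Fin n → Fin 1 → F, IsMR F m n 1 c' := by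
  classical
  obtain ⟨s, hms⟩ := hm2
  obtain ⟨t, hnt⟩ := hn2
  obtain ⟨s', hs'⟩ := hqm
  obtain ⟨c0, hMR0⟩ := hex
  have hn2' : 2 ≤ n := le_trans hm hmn
  have hst : s ≤ t := by
    rw [hms, hnt] at hmn
    exact (Nat.pow_le_pow_iff_right (by norm_num)).1 hmn
  have hdvd : m ∣ n := by
    rw [hms, hnt]
    exact pow_dvd_pow 2 hst
  set N := n / m with hN
  have hnm : n = m * N := (Nat.mul_div_cancel' hdvd).symm
  set r := t - s with hr
  have hNr : N = 2 ^ r := by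
    rw [hN, hms, hnt, hr, Nat.pow_div hst (by norm_num)]
  -- characteristic two
  haveI hchFm : CharP Fm 2 := S14.char_two_of_card_pow_two hs'
  have hcardF : Fintype.card F = 2 ^ (r * (m - 1) + s') := by
    rw [hcard, hs', hNr, ← pow_mul, ← pow_add]
  haveI hchF : CharP F 2 := S14.char_two_of_card_pow_two hcardF
  -- `ZMod 2`-module structures
  letI : Algebra (ZMod 2) Fm := ZMod.algebra Fm 2
  letI : Algebra (ZMod 2) F := ZMod.algebra F 2
  haveI : Module.Finite (ZMod 2) F := Module.Finite.of_finite
  haveI : Module.Finite (ZMod 2) (Fm × (Fin (m - 1) → Fin r → ZMod 2)) :=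
    Module.Finite.of_finite
  have hcardV : Fintype.card (Fin (m - 1) → Fin r → ZMod 2) = 2 ^ (r * (m - 1)) := by
    rw [Fintype.card_fun, Fintype.card_fun, ZMod.card, Fintype.card_fin, Fintype.card_fin,
      ← pow_mul]
  have hφcard : Fintype.card (Fin N) = Fintype.card (Fin r → ZMod 2) := by
    rw [Fintype.card_fun, ZMod.card, Fintype.card_fin, Fintype.card_fin, hNr]
  set φ0 : Fin N ≃ (Fin r → ZMod 2) := Fintype.equivOfCardEq hφcard with hφ0
  -- the additive identification of `F` with `Fm × V`
  have hcards : Fintype.card (Fm × (Fin (m - 1) → Fin r → ZMod 2)) = Fintype.card F := by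
    rw [Fintype.card_prod, hs', hcardV, hcardF, pow_add]
    ring
  have hfr : Module.finrank (ZMod 2) (Fm × (Fin (m - 1) → Fin r → ZMod 2)) =
      Module.finrank (ZMod 2) F := by
    have h1 := S14.card_eq_pow_finrank' (K := ZMod 2)
      (M := Fm × (Fin (m - 1) → Fin r → ZMod 2))
    have h2 := S14.card_eq_pow_finrank' (K := ZMod 2) (M := F)
    rw [hcards, h2, ZMod.card] at h1
    exact Nat.pow_right_injective le_rfl h1.symm
  obtain ⟨ι⟩ := FiniteDimensional.nonempty_linearEquiv_of_finrank_eq hfr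
  -- column splitting and the global parities
  set esn : Fin n ≃ Fin m × Fin N := (finCongr hnm).trans finProdFinEquiv.symm with hesn
  set cs : Fin m × Fin n → F := fun e =>
    ι (c0 (e.1, (esn e.2).1) 0, S14.gammaFun m N r φ0 (e.1, (esn e.2).2)) with hcs
  refine ⟨fun e _ => cs e, S14.isMR_of_cycle_sums hn2' cs ?_⟩
  intro k I J hk hI hJ hsum
  set t' : ℕ → Fin N := fun ℓ => (esn (J ℓ)).2 with ht'
  set q : ℕ → Fin m := fun ℓ => (esn (J ℓ)).1 with hq
  -- push the sum through ι
  have h1 : ∑ ℓ ∈ Finset.range k,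
      ((c0 (I ℓ, q ℓ) 0, S14.gammaFun m N r φ0 (I ℓ, t' ℓ)) -
       (c0 (I ((ℓ + 1) % k), q ℓ) 0, S14.gammaFun m N r φ0 (I ((ℓ + 1) % k), t' ℓ))) = 0 := by
    rw [← LinearEquiv.map_eq_zero_iff ι, map_sum, ← hsum]
    apply Finset.sum_congr rfl
    intro ℓ _
    rw [map_sub]
  -- the two components of the cycle sum
  have h2 : ∑ ℓ ∈ Finset.range k,
      (c0 (I ℓ, q ℓ) 0 - c0 (I ((ℓ + 1) % k), q ℓ) 0) = 0 := by
    have h5 := congrArg Prod.fst h1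
    rw [Prod.fst_sum] at h5
    simpa using h5
  have h3 : ∑ ℓ ∈ Finset.range k,
      (S14.gammaFun m N r φ0 (I ℓ, t' ℓ) -
        S14.gammaFun m N r φ0 (I ((ℓ + 1) % k), t' ℓ)) = 0 := by
    have h5 := congrArg Prod.snd h1
    rw [Prod.snd_sum] at h5
    simpa using h5
  -- all second coordinates along the cycle agree
  have htconst := S14.gamma_t_const (fun x => φ0 x) φ0.injective hk hI t' (by
    intro p
    have h4 := congrFun h3 p
    rw [Finset.sum_apply] at h4
    simpa [S14.gammaFun] using h4)
  -- hence the projected cycle is a simple cycle in the m × m grid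
  have hq_inj : Set.InjOn q (Set.Iio k) := by
    intro x hx y hy hxy
    apply hJ hx hy
    apply esn.injective
    exact Prod.ext hxy (htconst x hx y hy)
  exact S14.isMR_cycle_sum_ne_zero c0 hMR0 hk hI hq_inj h2
end
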